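/- Let R be a TRS and let t = f(t1,…,tn) be a term such that all ti are in normal form (in particular, this covers all basic terms). Then Dh(t, ⇉) ≤ Cplx_{⟨DTpar(R), DTpar(R), R⟩}(t#). -/

import Mathlib

namespace ParallelComplexity

/-! ## First-order terms -/

inductive Term (σ : Type) (V : Type) : Type where
  | var : V → Term σ V
  | fn : σ → List (Term σ V) → Term σ V

variable {σ V : Type}

mutual
  /-- Application of a substitution to a term. -/
  def Term.subst (θ : V → Term σ V) : Term σ V → Term σ V
    | Term.var x => θ x
    | Term.fn f ts => Term.fn f (Term.substList θ ts)
  def Term.substList (θ : V → Term σ V) : List (Term σ V) → List (Term σ V)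
    | [] => []
    | t :: ts => Term.subst θ t :: Term.substList θ ts
end

mutual
  /-- The size |t| of a term. -/
  def Term.size : Term σ V → ℕ
    | Term.var _ => 1
    | Term.fn _ ts => 1 + Term.sizeList ts
  def Term.sizeList : List (Term σ V) → ℕ
    | [] => 0
    | t :: ts => Term.size t + Term.sizeList ts
end

/-- Subterm `t|π` at a position (positions are lists of argument indices);
`none` if the position is not a position of `t`. -/
def Term.subtermAt : Term σ V → List ℕ → Option (Term σ V)
  | t, [] => some t
  | Term.var _, _ :: _ => none
  | Term.fn _ ts, i :: π =>
    match ts[i]? with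
    | none => none
    | some u => Term.subtermAt u π

/-- `t[s]π`: replacement of the subterm at position `π` by `s`. -/
def Term.replaceAt : Term σ V → List ℕ → Term σ V → Option (Term σ V)
  | _, [], s => some s
  | Term.var _, _ :: _, _ => none
  | Term.fn f ts, i :: π, s =>
    match ts[i]? with
    | none => none
    | some u =>
      match Term.replaceAt u π s with
      | none => none
      | some u' => some (Term.fn f (ts.set i u'))

def Term.isVar (t : Term σ V) : Prop := ∃ x, t = Term.var x

/-- `x` occurs as a variable in the term. -/
inductive Term.VarIn (x : V) : Term σ V → Prop
  | var : Term.VarIn x (Term.var x)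
  | fn {f : σ} {ts : List (Term σ V)} {t : Term σ V} :
      t ∈ ts → Term.VarIn x t → Term.VarIn x (Term.fn f ts)

/-! ## Term rewrite systems -/

structure Rule (σ V : Type) where
  lhs : Term σ V
  rhs : Term σ V

/-- A well-formed TRS: a finite set of rules `ℓ → r` with `ℓ ∉ V` and
`Var(r) ⊆ Var(ℓ)`. -/
def IsWfTRS (R : Set (Rule σ V)) : Prop :=
  R.Finite ∧ (∀ r ∈ R, ¬ r.lhs.isVar) ∧
    ∀ r ∈ R, ∀ x : V, Term.VarIn x r.rhs → Term.VarIn x r.lhs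

def IsRedex (R : Set (Rule σ V)) (t : Term σ V) : Prop :=
  ∃ r ∈ R, ∃ θ : V → Term σ V, t = Term.subst θ r.lhs

/-- An innermost redex: a redex none of whose proper subterms is a redex. -/
def IsInnermostRedex (R : Set (Rule σ V)) (t : Term σ V) : Prop :=
  IsRedex R t ∧
    ∀ π : List ℕ, π ≠ [] → ∀ u, t.subtermAt π = some u → ¬ IsRedex R u

/-- One rewrite step at position `π`. -/
def RewriteAt (R : Set (Rule σ V)) (π : List ℕ) (s t : Term σ V) : Prop :=
  ∃ r ∈ R, ∃ θ : V → Term σ V,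
    s.subtermAt π = some (Term.subst θ r.lhs) ∧
    s.replaceAt π (Term.subst θ r.rhs) = some t

/-- The rewrite relation `s →_R t`. -/
def Rewrite (R : Set (Rule σ V)) (s t : Term σ V) : Prop := ∃ π, RewriteAt R π s t

/-- The innermost rewrite relation `s →i t`. -/
def InnermostRewrite (R : Set (Rule σ V)) (s t : Term σ V) : Prop :=
  ∃ π, ∃ r ∈ R, ∃ θ : V → Term σ V,
    s.subtermAt π = some (Term.subst θ r.lhs) ∧
    IsInnermostRedex R (Term.subst θ r.lhs) ∧
    s.replaceAt π (Term.subst θ r.rhs) = some t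

def NormalForm (R : Set (Rule σ V)) (t : Term σ V) : Prop := ¬ ∃ u, Rewrite R t u

/-- Parallel-innermost rewriting `s ⇉ t`: `s →i⁺ t` and either
(a) `s` is an innermost redex and `s →i t`, or (b) `s = f(s₁,…,sₙ)`,
`t = f(t₁,…,tₙ)` and each `sₖ ⇉ tₖ` or `sₖ = tₖ` is a normal form. -/
inductive ParInnermost (R : Set (Rule σ V)) : Term σ V → Term σ V → Prop
  | redex {s t : Term σ V} :
      Relation.TransGen (InnermostRewrite R) s t →
      IsInnermostRedex R s → InnermostRewrite R s t → ParInnermost R s t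
  | congr (f : σ) (ss ts : List (Term σ V)) :
      Relation.TransGen (InnermostRewrite R) (Term.fn f ss) (Term.fn f ts) →
      ss.length = ts.length →
      -- each `sₖ ⇉ tₖ`, or `sₖ = tₖ` is a normal form (stated as the
      -- classically equivalent implication to satisfy the kernel's
      -- restrictions on nested inductive occurrences)
      (∀ p ∈ ss.zip ts, ¬ (p.1 = p.2 ∧ NormalForm R p.1) → ParInnermost R p.1 p.2) →
      ParInnermost R (Term.fn f ss) (Term.fn f ts)

/-! ## Abstract properties of relations -/

def Confluent {α : Type} (r : α → α → Prop) : Prop :=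
  ∀ s t u, Relation.ReflTransGen r s t → Relation.ReflTransGen r s u →
    ∃ v, Relation.ReflTransGen r t v ∧ Relation.ReflTransGen r u v

def Deterministic {α : Type} (r : α → α → Prop) : Prop :=
  ∀ s t u, r s t → r s u → t = u

def UniformlyConfluent {α : Type} (r : α → α → Prop) : Prop :=
  ∀ s t u, r s t → r s u → t = u ∨ ∃ v, r t v ∧ r u v

/-! ## Derivation height and runtime complexity -/

/-- `e`-th iterate of a relation. -/
def iterRel {α : Type} (r : α → α → Prop) : ℕ → α → α → Prop
  | 0 => fun a b => a = b
  | n + 1 => fun a c => ∃ b, r a b ∧ iterRel r n b c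

/-- Derivation height `Dh(t, →) = sup { e | ∃ t'. t →^e t' } ∈ ℕ ∪ {ω}`. -/
noncomputable def Dh {α : Type} (r : α → α → Prop) (t : α) : ℕ∞ :=
  sSup { e : ℕ∞ | ∃ n : ℕ, e = (n : ℕ∞) ∧ ∃ t', iterRel r n t t' }

/-- Defined symbols: root symbols of left-hand sides. -/
def Defined (R : Set (Rule σ V)) (f : σ) : Prop :=
  ∃ r ∈ R, ∃ ts : List (Term σ V), r.lhs = Term.fn f ts

def HasDefinedRoot (R : Set (Rule σ V)) (t : Term σ V) : Prop :=
  ∃ f ts, t = Term.fn f ts ∧ Defined R f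

/-- Constructor terms: terms over constructor symbols and variables. -/
inductive ConsTerm (R : Set (Rule σ V)) : Term σ V → Prop
  | var (x : V) : ConsTerm R (Term.var x)
  | fn (f : σ) (ts : List (Term σ V)) :
      ¬ Defined R f → (∀ t ∈ ts, ConsTerm R t) → ConsTerm R (Term.fn f ts)

/-- Basic terms: a defined symbol applied to constructor terms. -/
def BasicTerm (R : Set (Rule σ V)) (t : Term σ V) : Prop :=
  ∃ f ts, t = Term.fn f ts ∧ Defined R f ∧ ∀ u ∈ ts, ConsTerm R u

/-- Innermost runtime complexity. -/
noncomputable def irc (R : Set (Rule σ V)) (n : ℕ) : ℕ∞ :=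
  sSup { d : ℕ∞ | ∃ t, BasicTerm R t ∧ t.size ≤ n ∧ d = Dh (InnermostRewrite R) t }

/-- Parallel-innermost runtime complexity. -/
noncomputable def pirc (R : Set (Rule σ V)) (n : ℕ) : ℕ∞ :=
  sSup { d : ℕ∞ | ∃ t, BasicTerm R t ∧ t.size ≤ n ∧ d = Dh (ParInnermost R) t }

/-! ## Critical pairs -/

def RuleVars (r : Rule σ V) : Set V :=
  { x | Term.VarIn x r.lhs ∨ Term.VarIn x r.rhs }

/-- `r₂` is a variant of `r₁` (each is a substitution instance of the other). -/
def IsVariantOf (r₁ r₂ : Rule σ V) : Prop :=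
  ∃ θ₁ θ₂ : V → Term σ V,
    r₂.lhs = Term.subst θ₁ r₁.lhs ∧ r₂.rhs = Term.subst θ₁ r₁.rhs ∧
    r₁.lhs = Term.subst θ₂ r₂.lhs ∧ r₁.rhs = Term.subst θ₂ r₂.rhs

def Unifies (θ : V → Term σ V) (s t : Term σ V) : Prop :=
  Term.subst θ s = Term.subst θ t

def IsMGU (μ : V → Term σ V) (s t : Term σ V) : Prop :=
  Unifies μ s t ∧
    ∀ δ : V → Term σ V, Unifies δ s t →
      ∃ δ' : V → Term σ V, ∀ x : V, Term.subst δ' (μ x) = δ x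

/-- Critical pairs `⟨uσ[rσ]π, vσ⟩` of a TRS, from variable-renamed copies
`ℓ → r` and `u → v` of rules of `R` overlapping at a non-variable position
`π` of `u` (not a root overlap of variants of the same rule). -/
def CriticalPair (R : Set (Rule σ V)) (cp : Term σ V × Term σ V) : Prop :=
  ∃ r₁ r₂ r₁' r₂' : Rule σ V, r₁' ∈ R ∧ r₂' ∈ R ∧
    IsVariantOf r₁' r₁ ∧ IsVariantOf r₂' r₂ ∧
    (∀ x : V, x ∈ RuleVars r₁ → x ∉ RuleVars r₂) ∧
    ∃ (π : List ℕ) (u' : Term σ V),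
      r₂.lhs.subtermAt π = some u' ∧ ¬ u'.isVar ∧
      (π = [] → ¬ IsVariantOf r₁ r₂) ∧
      ∃ μ : V → Term σ V, IsMGU μ r₁.lhs u' ∧
        ∃ w : Term σ V,
          (Term.subst μ r₂.lhs).replaceAt π (Term.subst μ r₁.rhs) = some w ∧
          cp = (w, Term.subst μ r₂.rhs)

/-- `R` is non-overlapping iff it has no critical pairs. -/
def NonOverlapping (R : Set (Rule σ V)) : Prop := ∀ cp, ¬ CriticalPair R cp

/-- An innermost critical overlay: a critical pair at the root position whose
critical peak consists of two innermost rewrite steps. -/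
def InnermostCriticalOverlay (R : Set (Rule σ V)) (cp : Term σ V × Term σ V) : Prop :=
  ∃ r₁ r₂ r₁' r₂' : Rule σ V, r₁' ∈ R ∧ r₂' ∈ R ∧
    IsVariantOf r₁' r₁ ∧ IsVariantOf r₂' r₂ ∧
    (∀ x : V, x ∈ RuleVars r₁ → x ∉ RuleVars r₂) ∧
    ¬ IsVariantOf r₁ r₂ ∧
    ∃ μ : V → Term σ V, IsMGU μ r₁.lhs r₂.lhs ∧
      IsInnermostRedex R (Term.subst μ r₂.lhs) ∧
      cp = (Term.subst μ r₁.rhs, Term.subst μ r₂.rhs)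

/-! ## Positions with defined symbols and structural dependency chains -/

/-- Strict prefix order on positions: `PosGT τ π` iff `τ > π`,
i.e. `∃ π' ≠ ε, π π' = τ`. -/
def PosGT (τ π : List ℕ) : Prop := ∃ π' : List ℕ, π' ≠ [] ∧ π ++ π' = τ

/-- `PosD(t)`: positions of `t` with defined root symbol. -/
def PosD (R : Set (Rule σ V)) (t : Term σ V) : Set (List ℕ) :=
  { π | ∃ u, t.subtermAt π = some u ∧ HasDefinedRoot R u }

/-- Structural dependency chain `⟨π₁,…,πₖ⟩` for `t`: positions in `PosD(t)`
with `π₁ > … > πₖ`. -/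
def SDChain (R : Set (Rule σ V)) (t : Term σ V) (c : List (List ℕ)) : Prop :=
  (∀ π ∈ c, π ∈ PosD R t) ∧ c.Chain' PosGT

/-- Maximal structural dependency chains: `MSDC R t c` iff `c` is a maximal
structural dependency chain for `t`. -/
def MSDC (R : Set (Rule σ V)) (t : Term σ V) (c : List (List ℕ)) : Prop :=
  SDChain R t c ∧
    ((c = [] ∧ PosD R t = ∅) ∨
      ∃ (π₁ : List ℕ) (rest : List (List ℕ)), c = π₁ :: rest ∧
        ∀ π ∈ PosD R t, ¬ PosGT π π₁ ∧ (PosGT π₁ π → π ∈ rest))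

/-! ## Sharp terms, dependency tuples -/

/-- Extended signature: base symbols, sharp symbols `f#`, compound symbols `Com_n`. -/
inductive SharpSym (σ : Type) : Type where
  | base : σ → SharpSym σ
  | sharp : σ → SharpSym σ
  | com : ℕ → SharpSym σ

mutual
  def Term.embed : Term σ V → Term (SharpSym σ) V
    | Term.var x => Term.var x
    | Term.fn f ts => Term.fn (SharpSym.base f) (Term.embedList ts)
  def Term.embedList : List (Term σ V) → List (Term (SharpSym σ) V)
    | [] => []
    | t :: ts => Term.embed t :: Term.embedList ts
end

open Classical in
/-- `t#`: mark the root of `t` with its sharp symbol (if defined). -/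
noncomputable def Term.sharp (R : Set (Rule σ V)) : Term σ V → Term (SharpSym σ) V
  | Term.var x => Term.var x
  | Term.fn f ts =>
    if Defined R f then Term.fn (SharpSym.sharp f) (Term.embedList ts)
    else Term.fn (SharpSym.base f) (Term.embedList ts)

open Classical in
/-- Sharping on terms over the extended signature: for `t = f(…)` with `f` a
defined (base) symbol of `R`, mark the root; otherwise `t# = t`. -/
noncomputable def sharpC (R : Set (Rule σ V)) : Term (SharpSym σ) V → Term (SharpSym σ) V
  | Term.fn (SharpSym.base f) ts =>
    if Defined R f then Term.fn (SharpSym.sharp f) ts else Term.fn (SharpSym.base f) ts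
  | t => t

def liftRule (r : Rule σ V) : Rule (SharpSym σ) V :=
  { lhs := r.lhs.embed, rhs := r.rhs.embed }

def liftRules (R : Set (Rule σ V)) : Set (Rule (SharpSym σ) V) := liftRule '' R

/-- The dependency tuple `ℓ# → Com_k(u₁#,…,uₖ#)` built from subterms `u₁,…,uₖ`
of the right-hand side. -/
noncomputable def mkDT (R : Set (Rule σ V)) (ρ : Rule σ V) (us : List (Term σ V)) :
    Rule (SharpSym σ) V :=
  { lhs := Term.sharp R ρ.lhs,
    rhs := Term.fn (SharpSym.com us.length) (us.map (Term.sharp R)) }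

/-- `DTpar(ℓ → r)`: one dependency tuple per maximal structural dependency chain. -/
def DTparRule (R : Set (Rule σ V)) (ρ : Rule σ V) : Set (Rule (SharpSym σ) V) :=
  { d | ∃ (c : List (List ℕ)) (us : List (Term σ V)),
      MSDC R ρ.rhs c ∧
      List.Forall₂ (fun π u => ρ.rhs.subtermAt π = some u) c us ∧
      d = mkDT R ρ us }

/-- `DTpar(R)`. -/
def DTparSet (R : Set (Rule σ V)) : Set (Rule (SharpSym σ) V) :=
  ⋃ ρ ∈ R, DTparRule R ρ

/-! ## Chain trees and Cplx -/

/-- A (possibly infinite, finitely branching) tree whose nodes (addressed by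
paths) are labelled with a dependency tuple and a substitution; the child at
direction `i` corresponds to argument `i` of the `Com` symbol. -/
structure ChainTree (σ V : Type) where
  label : List ℕ → Option (Rule (SharpSym σ) V × (V → Term (SharpSym σ) V))

/-- `T` is a `(D,R)`-chain tree for the sharp term `t`. -/
def IsChainTree (D R : Set (Rule (SharpSym σ) V)) (T : ChainTree σ V)
    (t : Term (SharpSym σ) V) : Prop :=
  (∃ r ν, T.label [] = some (r, ν) ∧ Term.subst ν r.lhs = t) ∧
  (∀ (p : List ℕ) (i : ℕ), T.label (p ++ [i]) ≠ none → T.label p ≠ none) ∧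
  (∀ (p : List ℕ) (r : Rule (SharpSym σ) V) (ν : V → Term (SharpSym σ) V),
    T.label p = some (r, ν) →
      r ∈ D ∧ NormalForm R (Term.subst ν r.lhs) ∧
      ∀ (i : ℕ) (r' : Rule (SharpSym σ) V) (δ : V → Term (SharpSym σ) V),
        T.label (p ++ [i]) = some (r', δ) →
          ∃ (m : ℕ) (vs : List (Term (SharpSym σ) V)),
            r.rhs = Term.fn (SharpSym.com m) vs ∧
            ∃ v, vs[i]? = some v ∧
              Relation.ReflTransGen (InnermostRewrite R)
                (Term.subst ν v) (Term.subst δ r'.lhs))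

/-- `|T|_S`: the number of nodes of `T` labelled with a DT from `S`. -/
noncomputable def treeCount (T : ChainTree σ V) (S : Set (Rule (SharpSym σ) V)) : ℕ∞ :=
  Set.encard { p : List ℕ | ∃ r ν, T.label p = some (r, ν) ∧ r ∈ S }

/-- `Cplx⟨D,S,R⟩(t)`: the supremum of `|T|_S` over all `(D,R)`-chain trees `T`
for `t` (`0` if there is no chain tree). -/
noncomputable def Cplx (D S R : Set (Rule (SharpSym σ) V))
    (t : Term (SharpSym σ) V) : ℕ∞ :=
  sSup { c : ℕ∞ | ∃ T : ChainTree σ V, IsChainTree D R T t ∧ c = treeCount T S }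

/-- `irc⟨D,S,R⟩(n)`: runtime complexity of a DT problem. -/
noncomputable def ircDTP (D S : Set (Rule (SharpSym σ) V)) (R : Set (Rule σ V))
    (n : ℕ) : ℕ∞ :=
  sSup { c : ℕ∞ | ∃ t : Term σ V, BasicTerm R t ∧ t.size ≤ n ∧
    c = Cplx D S (liftRules R) (Term.sharp R t) }

/-! ## Relative rewriting -/

/-- An innermost rewrite step using a rule from `X`, with innermost-ness
relative to the whole system `W`. -/
def InnermostRewriteSub (W X : Set (Rule σ V)) (s t : Term σ V) : Prop :=
  ∃ π, ∃ r ∈ X, ∃ θ : V → Term σ V,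
    s.subtermAt π = some (Term.subst θ r.lhs) ∧
    IsInnermostRedex W (Term.subst θ r.lhs) ∧
    s.replaceAt π (Term.subst θ r.rhs) = some t

/-- Innermost relative rewriting `→i_{A/B}`:
`s →B* s' →A s'' →B* t`, all steps innermost wrt `A ∪ B`. -/
def RelInnermost (A B : Set (Rule σ V)) (s t : Term σ V) : Prop :=
  ∃ s' s'' : Term σ V,
    Relation.ReflTransGen (InnermostRewriteSub (A ∪ B) B) s s' ∧
    InnermostRewriteSub (A ∪ B) A s' s'' ∧
    Relation.ReflTransGen (InnermostRewriteSub (A ∪ B) B) s'' t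

/-- Innermost runtime complexity of a relative TRS `A/B`. -/
noncomputable def ircRel (A B : Set (Rule σ V)) (n : ℕ) : ℕ∞ :=
  sSup { d : ℕ∞ | ∃ t : Term σ V, BasicTerm (A ∪ B) t ∧ t.size ≤ n ∧
    d = Dh (RelInnermost A B) t }

/-! ## Dependency tuples (abstract DT problems) -/

inductive IsBaseTerm : Term (SharpSym σ) V → Prop
  | var (x : V) : IsBaseTerm (Term.var x)
  | fn (f : σ) (ts : List (Term (SharpSym σ) V)) :
      (∀ t ∈ ts, IsBaseTerm t) → IsBaseTerm (Term.fn (SharpSym.base f) ts)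

def IsSharpTerm (t : Term (SharpSym σ) V) : Prop :=
  ∃ (f : σ) (args : List (Term (SharpSym σ) V)),
    t = Term.fn (SharpSym.sharp f) args ∧ ∀ a ∈ args, IsBaseTerm a

/-- A dependency tuple: a rule `s# → Com_n(t₁#,…,tₙ#)`. -/
def IsDT (r : Rule (SharpSym σ) V) : Prop :=
  IsSharpTerm r.lhs ∧
    ∃ (n : ℕ) (ts : List (Term (SharpSym σ) V)),
      r.rhs = Term.fn (SharpSym.com n) ts ∧ ts.length = n ∧ ∀ t ∈ ts, IsSharpTerm t

/-! ## Argument normal forms -/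

/-- Argument normal form: a variable, or a term all of whose direct arguments
are normal forms. -/
def ArgNF (R : Set (Rule σ V)) (t : Term σ V) : Prop :=
  (∃ x, t = Term.var x) ∨ ∃ f ts, t = Term.fn f ts ∧ ∀ u ∈ ts, NormalForm R u

/-- A parallel-innermost step all of whose rewrites are at positions strictly
below the root. -/
def ParInnermostBelow (R : Set (Rule σ V)) (s t : Term σ V) : Prop :=
  ParInnermost R s t ∧ ¬ IsInnermostRedex R s

/-- `b` is a maximal parallel argument normal form of `u`. -/
noncomputable def MaxANF (R : Set (Rule σ V)) (u b : Term σ V) : Prop :=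
  ArgNF R b ∧ Relation.ReflTransGen (ParInnermostBelow R) u b ∧
    ∀ u', ArgNF R u' → Relation.ReflTransGen (ParInnermostBelow R) u u' →
      Dh (ParInnermost R) u' ≤ Dh (ParInnermost R) b

/-! ## Many-sorted type assignments -/

/-- Well-typedness of a term wrt a sort set `St`, a type assignment `arty`
(argument sorts and result sort for each symbol) and variable typing `vty`. -/
inductive WellTyped {τ : Type} (St : Type) (arty : τ → List St × St) (vty : V → St) :
    Term τ V → St → Prop
  | var (x : V) : WellTyped St arty vty (Term.var x) (vty x)
  | fn (f : τ) (ts : List (Term τ V)) :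
      ts.length = (arty f).1.length →
      (∀ p ∈ ts.zip (arty f).1, WellTyped St arty vty p.1 p.2) →
      WellTyped St arty vty (Term.fn f ts) (arty f).2

/-- A strict total order on positions extending the strict prefix order. -/
def TotalExtOfPrefix (gt' : List ℕ → List ℕ → Prop) : Prop :=
  (∀ π τ, PosGT π τ → gt' π τ) ∧
  (∀ π τ ρ, gt' π τ → gt' τ ρ → gt' π ρ) ∧
  (∀ π τ, gt' π τ → ¬ gt' τ π) ∧
  (∀ π τ, π ≠ τ → gt' π τ ∨ gt' τ π)


/-! ## Auxiliary machinery for the proof -/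

section Aux

open Relation

variable {σ V : Type}

/-! ### Size and a structural induction principle -/

theorem Term.mem_le_sizeList : ∀ (ts : List (Term σ V)) (t : Term σ V), t ∈ ts →
    t.size ≤ Term.sizeList ts := by
  intro ts
  induction ts with
  | nil => intro t ht; cases ht
  | cons a ts ih =>
    intro t ht
    rcases List.mem_cons.1 ht with rfl | ht
    · simp [Term.sizeList]
    · have := ih t ht
      simp [Term.sizeList]; omega

theorem Term.size_pos (t : Term σ V) : 1 ≤ t.size := by
  cases t with
  | var x => simp [Term.size]
  | fn f ts => simp [Term.size]

theorem Term.my_ind {P : Term σ V → Prop} (hv : ∀ x, P (Term.var x))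
    (hf : ∀ f ts, (∀ t ∈ ts, P t) → P (Term.fn f ts)) : ∀ t, P t := by
  have key : ∀ (n : ℕ) (t : Term σ V), t.size ≤ n → P t := by
    intro n
    induction n with
    | zero =>
      intro t ht
      have := Term.size_pos t; omega
    | succ n ih =>
      intro t ht
      cases t with
      | var x => exact hv x
      | fn f ts =>
        refine hf f ts (fun u hu => ih u ?_)
        have h1 := Term.mem_le_sizeList ts u hu
        have h2 : (Term.fn f ts : Term σ V).size = 1 + Term.sizeList ts := rfl
        omega
  exact fun t => key t.size t le_rfl

/-! ### Subterm and replacement lemmas -/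

@[simp] theorem Term.subtermAt_nil (t : Term σ V) : t.subtermAt [] = some t := by
  cases t <;> simp [Term.subtermAt]

@[simp] theorem Term.replaceAt_nil (t v : Term σ V) : t.replaceAt [] v = some v := by
  cases t <;> simp [Term.replaceAt]

theorem Term.subtermAt_fn_cons (f : σ) (ts : List (Term σ V)) (i : ℕ) (π : List ℕ) :
    (Term.fn f ts).subtermAt (i :: π) = (ts[i]?).bind (fun u => u.subtermAt π) := by
  cases h : ts[i]? <;> simp [Term.subtermAt, h]

@[simp] theorem Term.subtermAt_var_cons (x : V) (i : ℕ) (π : List ℕ) :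
    (Term.var x : Term σ V).subtermAt (i :: π) = none := rfl

theorem Term.subtermAt_append : ∀ (π τ : List ℕ) (t : Term σ V),
    t.subtermAt (π ++ τ) = (t.subtermAt π).bind (fun u => u.subtermAt τ) := by
  intro π
  induction π with
  | nil => intro τ t; simp
  | cons i π ih =>
    intro τ t
    cases t with
    | var x => simp
    | fn f ts =>
      rw [List.cons_append, Term.subtermAt_fn_cons, Term.subtermAt_fn_cons]
      cases h : ts[i]? with
      | none => simp
      | some u => simp [ih]

theorem Term.exists_replaceAt : ∀ (π : List ℕ) (t u v : Term σ V),
    t.subtermAt π = some u → ∃ t', t.replaceAt π v = some t' := by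
  intro π
  induction π with
  | nil => intro t u v _; exact ⟨v, by simp⟩
  | cons i π ih =>
    intro t u v h
    cases t with
    | var x => simp at h
    | fn f ts =>
      rw [Term.subtermAt_fn_cons] at h
      cases hg : ts[i]? with
      | none => rw [hg] at h; simp at h
      | some a =>
        rw [hg] at h; simp at h
        obtain ⟨t', ht'⟩ := ih a u v h
        exact ⟨Term.fn f (ts.set i t'), by simp [Term.replaceAt, hg, ht']⟩

theorem Term.replaceAt_lift : ∀ (π τ : List ℕ) (s u u' v : Term σ V),
    s.subtermAt π = some u → u.replaceAt τ v = some u' →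
    ∃ s', s.replaceAt (π ++ τ) v = some s' := by
  intro π
  induction π with
  | nil =>
    intro τ s u u' v hs hu
    simp at hs; subst hs
    exact ⟨u', hu⟩

  | cons i π ih =>
    intro τ s u u' v hs hu
    cases s with
    | var x => simp at hs
    | fn f ts =>
      rw [Term.subtermAt_fn_cons] at hs
      cases hg : ts[i]? with
      | none => rw [hg] at hs; simp at hs
      | some a =>
        rw [hg] at hs; simp at hs
        obtain ⟨s', hs'⟩ := ih τ a u u' v hs hu
        exact ⟨Term.fn f (ts.set i s'), by simp [Term.replaceAt, hg, hs']⟩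

/-! ### Rewriting basics -/

theorem rewrite_of_redex_subterm {R : Set (Rule σ V)} {s u : Term σ V} {π : List ℕ}
    (hs : s.subtermAt π = some u) (hu : IsRedex R u) : ∃ v, Rewrite R s v := by
  obtain ⟨r, hr, θ, rfl⟩ := hu
  obtain ⟨s', hs'⟩ := Term.exists_replaceAt π s _ (Term.subst θ r.rhs) hs
  exact ⟨s', π, r, hr, θ, hs, hs'⟩

theorem not_nf_of_redex {R : Set (Rule σ V)} {t : Term σ V} (h : IsRedex R t) :
    ¬ NormalForm R t := by
  intro hnf
  exact hnf (rewrite_of_redex_subterm (Term.subtermAt_nil t) h)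

theorem nf_subterm {R : Set (Rule σ V)} {s u : Term σ V} {π : List ℕ}
    (hnf : NormalForm R s) (hs : s.subtermAt π = some u) : NormalForm R u := by
  rintro ⟨v, τ, r, hr, θ, hsub, hrep⟩
  refine hnf ?_
  have : s.subtermAt (π ++ τ) = some (Term.subst θ r.lhs) := by
    rw [Term.subtermAt_append, hs]; exact hsub
  exact rewrite_of_redex_subterm this ⟨r, hr, θ, rfl⟩

theorem nf_no_innermost {R : Set (Rule σ V)} {s v : Term σ V}
    (hnf : NormalForm R s) : ¬ InnermostRewrite R s v := by
  rintro ⟨π, r, hr, θ, hsub, _, hrep⟩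
  exact hnf ⟨v, π, r, hr, θ, hsub, hrep⟩

theorem par_transGen {R : Set (Rule σ V)} {s t : Term σ V} (h : ParInnermost R s t) :
    Relation.TransGen (InnermostRewrite R) s t := by
  cases h with
  | redex h _ _ => exact h
  | congr f ss ts h _ _ => exact h

theorem nf_not_par {R : Set (Rule σ V)} {s t : Term σ V} (hnf : NormalForm R s) :
    ¬ ParInnermost R s t := by
  intro h
  obtain ⟨c, h1, _⟩ := Relation.TransGen.head'_iff.1 (par_transGen h)
  exact nf_no_innermost hnf h1

theorem nf_rtg_eq {R : Set (Rule σ V)} {s t : Term σ V} (hnf : NormalForm R s)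
    (h : Relation.ReflTransGen (InnermostRewrite R) s t) : t = s := by
  rcases h.cases_head with rfl | ⟨c, h1, _⟩
  · rfl
  · exact absurd h1 (nf_no_innermost hnf)

/-! ### iterRel lemmas -/

theorem iterRel_zero {α : Type} {r : α → α → Prop} {a b : α} :
    iterRel r 0 a b ↔ a = b := Iff.rfl

theorem iterRel_succ {α : Type} {r : α → α → Prop} {n : ℕ} {a c : α} :
    iterRel r (n + 1) a c ↔ ∃ b, r a b ∧ iterRel r n b c := Iff.rfl

theorem iterRel_rtg {α : Type} {r : α → α → Prop} :
    ∀ {n : ℕ} {a b : α}, iterRel r n a b → Relation.ReflTransGen r a b := by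
  intro n
  induction n with
  | zero => intro a b h; rw [iterRel_zero] at h; subst h; rfl
  | succ n ih =>
    rintro a b ⟨c, hc, h⟩
    exact Relation.ReflTransGen.head hc (ih h)

theorem iterRel_snoc {α : Type} {r : α → α → Prop} :
    ∀ {n : ℕ} {a b c : α}, iterRel r n a b → r b c → iterRel r (n + 1) a c := by
  intro n
  induction n with
  | zero =>
    intro a b c h hb; rw [iterRel_zero] at h; subst h; exact ⟨c, hb, rfl⟩
  | succ m ih =>
    rintro a b c ⟨d, hd, h⟩ hb
    exact ⟨d, hd, ih h hb⟩

theorem rtg_iterRel {α : Type} {r : α → α → Prop} {a b : α}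
    (h : Relation.ReflTransGen r a b) : ∃ n, iterRel r n a b := by
  induction h with
  | refl => exact ⟨0, rfl⟩
  | tail h1 h2 ih =>
    obtain ⟨n, hn⟩ := ih
    exact ⟨n + 1, iterRel_snoc hn h2⟩

theorem nf_iterRel_innermost {R : Set (Rule σ V)} {n : ℕ} {a b : Term σ V}
    (hnf : NormalForm R a) (h : iterRel (InnermostRewrite R) n a b) : n = 0 ∧ b = a := by
  cases n with
  | zero => exact ⟨rfl, (iterRel_zero.1 h).symm⟩
  | succ n =>
    obtain ⟨c, hc, _⟩ := h
    exact absurd hc (nf_no_innermost hnf)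

theorem nf_iterRel_par {R : Set (Rule σ V)} {n : ℕ} {a b : Term σ V}
    (hnf : NormalForm R a) (h : iterRel (ParInnermost R) n a b) : n = 0 := by
  cases n with
  | zero => rfl
  | succ n =>
    obtain ⟨c, hc, _⟩ := h
    exact absurd hc (nf_not_par hnf)

/-! ### Innermost redexes -/

theorem innermost_subterm_nf {R : Set (Rule σ V)} {s u : Term σ V} {π : List ℕ}
    (h : IsInnermostRedex R s) (hs : s.subtermAt π = some u) (hπ : π ≠ []) :
    NormalForm R u := by
  rintro ⟨v, τ, r, hr, θ, hsub, hrep⟩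
  have hsub2 : s.subtermAt (π ++ τ) = some (Term.subst θ r.lhs) := by
    rw [Term.subtermAt_append, hs]; exact hsub
  exact h.2 (π ++ τ) (by simp [hπ]) _ hsub2 ⟨r, hr, θ, rfl⟩

theorem root_step_of_innermost {R : Set (Rule σ V)} {s v : Term σ V}
    (h : IsInnermostRedex R s) (hst : InnermostRewrite R s v) :
    ∃ r ∈ R, ∃ δ, s = Term.subst δ r.lhs ∧ v = Term.subst δ r.rhs := by
  obtain ⟨π, r, hr, θ, hsub, hin, hrep⟩ := hst
  cases π with
  | nil =>
    simp at hsub hrep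
    exact ⟨r, hr, θ, hsub, hrep.symm⟩
  | cons i π =>
    exact absurd ⟨r, hr, θ, rfl⟩ (h.2 (i :: π) (by simp) _ hsub)

theorem args_nf_root_redex {R : Set (Rule σ V)} {f : σ} {ss : List (Term σ V)} {v : Term σ V}
    (hnf : ∀ (k : ℕ) (a : Term σ V), ss[k]? = some a → NormalForm R a)
    (hst : InnermostRewrite R (Term.fn f ss) v) :
    IsInnermostRedex R (Term.fn f ss) ∧
      ∃ r ∈ R, ∃ δ, Term.fn f ss = Term.subst δ r.lhs ∧ v = Term.subst δ r.rhs := by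
  obtain ⟨π, r, hr, θ, hsub, hin, hrep⟩ := hst
  have hroot : π = [] := by
    cases π with
    | nil => rfl
    | cons i τ =>
      rw [Term.subtermAt_fn_cons] at hsub
      cases hg : ss[i]? with
      | none => rw [hg] at hsub; simp at hsub
      | some a =>
        rw [hg] at hsub; simp at hsub
        exact absurd (nf_subterm (hnf i a hg) hsub) (not_nf_of_redex ⟨r, hr, θ, rfl⟩)
  subst hroot
  simp at hsub hrep
  constructor
  · rw [hsub]; exact hin
  · exact ⟨r, hr, θ, hsub, hrep.symm⟩

theorem mem_of_getElem?' {α : Type*} {l : List α} {i : ℕ} {a : α}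
    (h : l[i]? = some a) : a ∈ l := by
  obtain ⟨hlt, rfl⟩ := List.getElem?_eq_some_iff.1 h
  exact List.getElem_mem _

/-! ### Substitution lemmas -/

theorem Term.subst_fn (θ : V → Term σ V) (f : σ) (ts : List (Term σ V)) :
    Term.subst θ (Term.fn f ts) = Term.fn f (Term.substList θ ts) := by
  simp [Term.subst]

theorem Term.substList_eq_map (θ : V → Term σ V) :
    ∀ ts : List (Term σ V), Term.substList θ ts = ts.map (Term.subst θ) := by
  intro ts
  induction ts with
  | nil => simp [Term.substList]
  | cons a ts ih => simp [Term.substList, ih]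

theorem Term.substList_getElem? (θ : V → Term σ V) (ts : List (Term σ V)) (i : ℕ) :
    (Term.substList θ ts)[i]? = (ts[i]?).map (Term.subst θ) := by
  simp [Term.substList_eq_map]

theorem Term.subtermAt_subst {θ : V → Term σ V} :
    ∀ (π : List ℕ) (u w : Term σ V), u.subtermAt π = some w →
      (Term.subst θ u).subtermAt π = some (Term.subst θ w) := by
  intro π
  induction π with
  | nil => intro u w h; simp at h; subst h; simp
  | cons i π ih =>
    intro u w h
    cases u with
    | var x => simp at h
    | fn f ts =>
      rw [Term.subtermAt_fn_cons] at h
      cases hg : ts[i]? with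
      | none => rw [hg] at h; simp at h
      | some a =>
        rw [hg] at h; simp at h
        rw [Term.subst_fn, Term.subtermAt_fn_cons, Term.substList_getElem?, hg]
        simpa using ih a w h

theorem varIn_of_subterm_var {x : V} :
    ∀ (π : List ℕ) (u : Term σ V), u.subtermAt π = some (Term.var x) → Term.VarIn x u := by
  intro π
  induction π with
  | nil => intro u h; simp at h; subst h; exact Term.VarIn.var
  | cons i π ih =>
    intro u h
    cases u with
    | var y => simp at h
    | fn f ts =>
      rw [Term.subtermAt_fn_cons] at h
      cases hg : ts[i]? with
      | none => rw [hg] at h; simp at h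
      | some a =>
        rw [hg] at h; simp at h
        exact Term.VarIn.fn (mem_of_getElem?' hg) (ih a h)

theorem subterm_var_of_varIn {x : V} {u : Term σ V} (h : Term.VarIn x u) :
    ∃ π, u.subtermAt π = some (Term.var x) := by
  induction h with
  | var => exact ⟨[], rfl⟩
  | fn hmem _ ih =>
    obtain ⟨π, hπ⟩ := ih
    obtain ⟨i, hi⟩ := List.getElem?_of_mem hmem
    exact ⟨i :: π, by rw [Term.subtermAt_fn_cons, hi]; simpa using hπ⟩

/-- Skeleton decomposition of subterms of an instance. -/
theorem subst_subterm_cases {θ : V → Term σ V} :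
    ∀ (π : List ℕ) (u w : Term σ V), (Term.subst θ u).subtermAt π = some w →
      (∃ u', u.subtermAt π = some u' ∧ ¬ u'.isVar ∧ w = Term.subst θ u') ∨
      (∃ x τ, Term.VarIn x u ∧ (θ x).subtermAt τ = some w) := by
  intro π
  induction π with
  | nil =>
    intro u w h
    simp at h
    cases u with
    | var x => exact Or.inr ⟨x, [], Term.VarIn.var, by simpa [Term.subst] using h⟩
    | fn f ts =>
      refine Or.inl ⟨Term.fn f ts, rfl, ?_, h.symm⟩
      rintro ⟨y, hy⟩
      cases hy
  | cons i π ih =>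
    intro u w h
    cases u with
    | var x => exact Or.inr ⟨x, i :: π, Term.VarIn.var, h⟩
    | fn f ts =>
      rw [Term.subst_fn, Term.subtermAt_fn_cons, Term.substList_getElem?] at h
      cases hg : ts[i]? with
      | none => rw [hg] at h; simp at h
      | some a =>
        rw [hg] at h; simp at h
        rcases ih a w h with ⟨u', h1, h2, h3⟩ | ⟨x, τ, h1, h2⟩
        · exact Or.inl ⟨u', by rw [Term.subtermAt_fn_cons, hg]; simpa using h1, h2, h3⟩
        · exact Or.inr ⟨x, τ, Term.VarIn.fn (mem_of_getElem?' hg) h1, h2⟩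

/-- A redex inside an instance with normal-form substitution sits at a defined
skeleton position. -/
theorem skel_redex {R : Set (Rule σ V)} (hWf : ∀ r ∈ R, ¬ r.lhs.isVar)
    {θ : V → Term σ V} {u w : Term σ V} {π : List ℕ}
    (hθ : ∀ x, Term.VarIn x u → NormalForm R (θ x))
    (h : (Term.subst θ u).subtermAt π = some w) (hw : IsRedex R w) :
    ∃ u', u.subtermAt π = some u' ∧ w = Term.subst θ u' ∧ HasDefinedRoot R u' := by
  rcases subst_subterm_cases π u w h with ⟨u', h1, h2, h3⟩ | ⟨x, τ, h1, h2⟩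
  · refine ⟨u', h1, h3, ?_⟩
    obtain ⟨r, hr, δ, rfl⟩ := hw
    have hlv := hWf r hr
    cases hl : r.lhs with
    | var y => exact absurd ⟨y, hl⟩ hlv
    | fn g ls =>
      cases u' with
      | var y => exact absurd ⟨y, rfl⟩ h2
      | fn f' us =>
        refine ⟨f', us, rfl, ?_⟩
        have : Term.subst θ (Term.fn f' us) = Term.subst δ (Term.fn g ls) := by rw [← hl, h3]
        rw [Term.subst_fn, Term.subst_fn] at this
        injection this with h4 h5
        subst h4
        exact ⟨r, hr, ls, hl⟩
  · exact absurd (nf_subterm (hθ x h1) h2) (not_nf_of_redex hw)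

theorem posD_nonempty_of_step {R : Set (Rule σ V)} (hWf : ∀ r ∈ R, ¬ r.lhs.isVar)
    {θ : V → Term σ V} {u v : Term σ V}
    (hθ : ∀ x, Term.VarIn x u → NormalForm R (θ x))
    (hst : InnermostRewrite R (Term.subst θ u) v) : ∃ π, π ∈ PosD R u := by
  obtain ⟨π, r, hr, δ, hsub, _, _⟩ := hst
  obtain ⟨u', h1, _, h3⟩ := skel_redex hWf hθ hsub ⟨r, hr, δ, rfl⟩
  exact ⟨π, u', h1, h3⟩

/-! ### Context lifting of innermost steps -/

theorem arg_step {R : Set (Rule σ V)} {f : σ} {ss : List (Term σ V)} {i : ℕ} {a b : Term σ V}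
    (hg : ss[i]? = some a) (h : InnermostRewrite R a b) :
    InnermostRewrite R (Term.fn f ss) (Term.fn f (ss.set i b)) := by
  obtain ⟨π, r, hr, θ, hsub, hin, hrep⟩ := h
  refine ⟨i :: π, r, hr, θ, ?_, hin, ?_⟩
  · rw [Term.subtermAt_fn_cons, hg]; simpa using hsub
  · simp [Term.replaceAt, hg, hrep]

theorem listGet_mid {α : Type*} : ∀ (L : List α) (c : α) (Rr : List α),
    (L ++ c :: Rr)[L.length]? = some c := by
  intro L
  induction L with
  | nil => simp
  | cons a L ih => simpa using ih

theorem listSet_mid {α : Type*} : ∀ (L : List α) (c d : α) (Rr : List α),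
    (L ++ c :: Rr).set L.length d = L ++ d :: Rr := by
  intro L
  induction L with
  | nil => simp
  | cons a L ih => simp [ih]

theorem one_arg_steps {R : Set (Rule σ V)} {f : σ} {a b : Term σ V}
    (h : Relation.ReflTransGen (InnermostRewrite R) a b) (L Rr : List (Term σ V)) :
    Relation.ReflTransGen (InnermostRewrite R) (Term.fn f (L ++ a :: Rr)) (Term.fn f (L ++ b :: Rr)) := by
  induction h with
  | refl => rfl
  | tail h1 h2 ih =>
    refine ih.tail ?_
    have := arg_step (f := f) (listGet_mid L _ Rr) h2
    rwa [listSet_mid] at this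

theorem ctx_steps {R : Set (Rule σ V)} {f : σ} :
    ∀ (ss ts pre : List (Term σ V)), ss.length = ts.length →
    (∀ (k : ℕ) (a b : Term σ V), ss[k]? = some a → ts[k]? = some b →
      Relation.ReflTransGen (InnermostRewrite R) a b) →
    Relation.ReflTransGen (InnermostRewrite R) (Term.fn f (pre ++ ss)) (Term.fn f (pre ++ ts)) := by
  intro ss
  induction ss with
  | nil =>
    intro ts pre hlen _
    cases ts with
    | nil => rfl
    | cons b ts => simp at hlen
  | cons a ss ih =>
    intro ts pre hlen hargs
    cases ts with
    | nil => simp at hlen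
    | cons b ts =>
      have h1 : Relation.ReflTransGen (InnermostRewrite R) a b := hargs 0 a b (by simp) (by simp)
      refine Relation.ReflTransGen.trans (one_arg_steps h1 pre ss) ?_
      have h2 := ih ts (pre ++ [b]) (by simpa using hlen)
        (fun k x y hx hy => hargs (k + 1) x y (by simpa using hx) (by simpa using hy))
      simpa using h2

theorem ctx_steps' {R : Set (Rule σ V)} {f : σ}
    (ss ts : List (Term σ V)) (hlen : ss.length = ts.length)
    (hargs : ∀ (k : ℕ) (a b : Term σ V), ss[k]? = some a → ts[k]? = some b →
      Relation.ReflTransGen (InnermostRewrite R) a b) :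
    Relation.ReflTransGen (InnermostRewrite R) (Term.fn f ss) (Term.fn f ts) := by
  simpa using ctx_steps ss ts [] hlen hargs

/-! ### Embedding lemmas -/

theorem Term.embedList_eq_map : ∀ ts : List (Term σ V), Term.embedList ts = ts.map Term.embed := by
  intro ts
  induction ts with
  | nil => simp [Term.embedList]
  | cons a ts ih => simp [Term.embedList, ih]

theorem Term.embed_fn (f : σ) (ts : List (Term σ V)) :
    Term.embed (Term.fn f ts) = Term.fn (SharpSym.base f) (ts.map Term.embed) := by
  simp [Term.embed, Term.embedList_eq_map]

theorem Term.embed_subst (θ : V → Term σ V) (u : Term σ V) :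
    Term.embed (Term.subst θ u) = Term.subst (fun x => Term.embed (θ x)) (Term.embed u) := by
  induction u using Term.my_ind with
  | hv x => simp [Term.subst, Term.embed]
  | hf f ts ih =>
    rw [Term.subst_fn, Term.embed_fn, Term.embed_fn, Term.subst_fn,
      Term.substList_eq_map, Term.substList_eq_map]
    simp only [List.map_map]
    congr 1
    exact List.map_congr_left fun a ha => ih a ha

theorem Term.embed_injective : ∀ (t s : Term σ V), Term.embed t = Term.embed s → t = s := by
  have key : ∀ t : Term σ V, ∀ s, Term.embed t = Term.embed s → t = s := by
    intro t
    induction t using Term.my_ind with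
    | hv x =>
      intro s h
      cases s with
      | var y => simpa [Term.embed] using h
      | fn g us => rw [Term.embed_fn] at h; cases h
    | hf f ts ih =>
      intro s h
      cases s with
      | var y => rw [Term.embed_fn] at h; cases h
      | fn g us =>
        rw [Term.embed_fn, Term.embed_fn] at h
        injection h with h1 h2
        injection h1 with h1
        subst h1
        congr 1
        induction ts generalizing us with
        | nil => cases us with | nil => rfl | cons => simp at h2
        | cons a ts ih2 =>
          cases us with
          | nil => simp at h2
          | cons b us =>
            simp at h2
            rw [ih a (by simp) b h2.1, ih2 (fun x hx => ih x (List.mem_cons_of_mem _ hx)) us h2.2]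
  exact key

theorem Term.subtermAt_embed : ∀ (π : List ℕ) (u : Term σ V),
    (Term.embed u).subtermAt π = (u.subtermAt π).map Term.embed := by
  intro π
  induction π with
  | nil => intro u; simp
  | cons i π ih =>
    intro u
    cases u with
    | var x => simp [Term.embed]
    | fn f ts =>
      rw [Term.embed_fn, Term.subtermAt_fn_cons, Term.subtermAt_fn_cons]
      cases hg : ts[i]? with
      | none => simp [hg]
      | some a => simp [hg, ih]

theorem Term.replaceAt_embed : ∀ (π : List ℕ) (u v : Term σ V),
    (Term.embed u).replaceAt π (Term.embed v) = (u.replaceAt π v).map Term.embed := by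
  intro π
  induction π with
  | nil => intro u v; simp
  | cons i π ih =>
    intro u v
    cases u with
    | var x => simp [Term.embed, Term.replaceAt]
    | fn f ts =>
      rw [Term.embed_fn]
      cases hg : ts[i]? with
      | none => simp [Term.replaceAt, hg]
      | some a =>
        have hg' : (ts.map Term.embed)[i]? = some (Term.embed a) := by simp [hg]
        cases hr : a.replaceAt π v with
        | none =>
          have h2 : (Term.embed a).replaceAt π (Term.embed v) = none := by
            rw [ih, hr]; rfl
          simp [Term.replaceAt, hg, hg', hr, h2]
        | some a' =>
          have h2 : (Term.embed a).replaceAt π (Term.embed v) = some (Term.embed a') := by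
            rw [ih, hr]; rfl
          simp [Term.replaceAt, hg, hg', hr, h2, Term.embed_fn, List.map_set]

/-- Variables of `l` are sent to embedded terms by any substitution matching an
embedded term against `embed l`. -/
theorem embed_match_vars {θ : V → Term (SharpSym σ) V} {l t : Term σ V}
    (h : Term.subst θ (Term.embed l) = Term.embed t) :
    ∀ x, Term.VarIn x l → ∃ s : Term σ V, Term.embed s = θ x := by
  intro x hx
  obtain ⟨π, hπ⟩ := subterm_var_of_varIn hx
  have h1 : (Term.embed l).subtermAt π = some (Term.var x) := by
    rw [Term.subtermAt_embed, hπ]; rfl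
  have h2 : (Term.subst θ (Term.embed l)).subtermAt π = some (θ x) :=
    Term.subtermAt_subst π _ _ h1
  rw [h, Term.subtermAt_embed] at h2
  cases hs : t.subtermAt π with
  | none => rw [hs] at h2; simp at h2
  | some s =>
    rw [hs] at h2; simp at h2
    exact ⟨s, h2⟩

theorem embed_subst_of_vars {θ : V → Term (SharpSym σ) V} {θ' : V → Term σ V} {l : Term σ V}
    (h : ∀ x, Term.VarIn x l → Term.embed (θ' x) = θ x) :
    Term.subst θ (Term.embed l) = Term.embed (Term.subst θ' l) := by
  induction l using Term.my_ind with
  | hv x => simp [Term.embed, Term.subst, (h x Term.VarIn.var).symm]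
  | hf f ts ih =>
    rw [Term.embed_fn, Term.subst_fn, Term.subst_fn, Term.embed_fn, Term.substList_eq_map,
      Term.substList_eq_map]
    simp only [List.map_map]
    congr 1
    refine List.map_congr_left fun a ha => ?_
    exact ih a ha fun x hx => h x (Term.VarIn.fn ha hx)

/-- If an embedded term is an instance of an embedded pattern, it is the
embedding of an instance. -/
theorem embed_matches {θ : V → Term (SharpSym σ) V} {l t : Term σ V}
    (h : Term.subst θ (Term.embed l) = Term.embed t) :
    ∃ θ' : V → Term σ V, t = Term.subst θ' l := by
  classical
  refine ⟨fun x => if hx : ∃ s : Term σ V, Term.embed s = θ x then hx.choose else t, ?_⟩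
  apply Term.embed_injective
  rw [← embed_subst_of_vars (θ := θ), h]
  intro x hx
  have hex := embed_match_vars h x hx
  rw [dif_pos hex]
  exact hex.choose_spec

theorem nf_embed {R : Set (Rule σ V)} {u : Term σ V} (hnf : NormalForm R u) :
    NormalForm (liftRules R) (Term.embed u) := by
  rintro ⟨v, π, r', hr', θ, hsub, hrep⟩
  obtain ⟨r0, hr0, rfl⟩ := hr'
  rw [Term.subtermAt_embed] at hsub
  cases hs : u.subtermAt π with
  | none => rw [hs] at hsub; simp at hsub
  | some w =>
    rw [hs] at hsub; simp at hsub
    obtain ⟨θ', rfl⟩ := embed_matches (l := r0.lhs) hsub.symm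
    exact absurd (rewrite_of_redex_subterm hs ⟨r0, hr0, θ', rfl⟩).choose_spec
      (fun h => hnf ⟨_, h⟩)

theorem step_embed {R : Set (Rule σ V)} {u v : Term σ V}
    (h : InnermostRewrite R u v) :
    InnermostRewrite (liftRules R) (Term.embed u) (Term.embed v) := by
  obtain ⟨π, r, hr, θ, hsub, hin, hrep⟩ := h
  refine ⟨π, liftRule r, ⟨r, hr, rfl⟩, fun x => Term.embed (θ x), ?_, ?_, ?_⟩
  · rw [Term.subtermAt_embed, hsub]
    simp [liftRule, Term.embed_subst]
  · constructor
    · exact ⟨liftRule r, ⟨r, hr, rfl⟩, fun x => Term.embed (θ x), rfl⟩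
    · intro τ hτ w hw hred
      rw [show Term.subst (fun x => Term.embed (θ x)) (liftRule r).lhs
          = Term.embed (Term.subst θ r.lhs) from (Term.embed_subst θ r.lhs).symm,
        Term.subtermAt_embed] at hw
      cases hs : (Term.subst θ r.lhs).subtermAt τ with
      | none => rw [hs] at hw; simp at hw
      | some w0 =>
        rw [hs] at hw; simp at hw
        subst hw
        obtain ⟨r2', hr2', θ2, hw2⟩ := hred
        obtain ⟨r2, hr2, rfl⟩ := hr2'
        obtain ⟨θ2', rfl⟩ := embed_matches (l := r2.lhs) (t := w0) hw2.symm
        exact hin.2 τ hτ _ hs ⟨r2, hr2, θ2', rfl⟩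
  · rw [show Term.subst (fun x => Term.embed (θ x)) (liftRule r).rhs
        = Term.embed (Term.subst θ r.rhs) from (Term.embed_subst θ r.rhs).symm,
      Term.replaceAt_embed, hrep]
    rfl

theorem rtg_embed {R : Set (Rule σ V)} {u v : Term σ V}
    (h : Relation.ReflTransGen (InnermostRewrite R) u v) :
    Relation.ReflTransGen (InnermostRewrite (liftRules R)) (Term.embed u) (Term.embed v) := by
  induction h with
  | refl => rfl
  | tail _ h2 ih => exact ih.tail (step_embed h2)

/-! ### Sharp lemmas -/

theorem sharp_fn_defined {R : Set (Rule σ V)} {f : σ} (hf : Defined R f) (ts : List (Term σ V)) :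
    Term.sharp R (Term.fn f ts) = Term.fn (SharpSym.sharp f) (ts.map Term.embed) := by
  simp [Term.sharp, hf, Term.embedList_eq_map]

theorem sharp_subst_defined {R : Set (Rule σ V)} {f : σ} (hf : Defined R f)
    (θ : V → Term σ V) (ts : List (Term σ V)) :
    Term.sharp R (Term.subst θ (Term.fn f ts)) =
      Term.subst (fun x => Term.embed (θ x)) (Term.sharp R (Term.fn f ts)) := by
  rw [Term.subst_fn, sharp_fn_defined hf, sharp_fn_defined hf, Term.subst_fn,
    Term.substList_eq_map, Term.substList_eq_map]
  simp only [List.map_map]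
  congr 1
  exact List.map_congr_left fun a _ => Term.embed_subst θ a

/-- A sharp-rooted term with normal-form (embedded) arguments is a normal form
of the lifted system. -/
theorem sharp_nf {R : Set (Rule σ V)} (hWf : ∀ r ∈ R, ¬ r.lhs.isVar) (f : σ)
    (as : List (Term σ V)) (hnf : ∀ a ∈ as, NormalForm R a) :
    NormalForm (liftRules R) (Term.fn (SharpSym.sharp f) (as.map Term.embed)) := by
  rintro ⟨v, π, r', hr', θ, hsub, hrep⟩
  obtain ⟨r0, hr0, rfl⟩ := hr'
  cases π with
  | nil =>
    simp at hsub
    cases hl : r0.lhs with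
    | var y => exact absurd ⟨y, hl⟩ (hWf r0 hr0)
    | fn g ls =>
      rw [show (liftRule r0).lhs = Term.embed r0.lhs from rfl, hl, Term.embed_fn,
        Term.subst_fn] at hsub
      cases hsub
  | cons i τ =>
    rw [Term.subtermAt_fn_cons] at hsub
    cases hg : (as.map Term.embed)[i]? with
    | none => rw [hg] at hsub; simp at hsub
    | some e =>
      rw [hg] at hsub; simp at hsub
      rw [List.getElem?_map] at hg
      cases hga : as[i]? with
      | none => rw [hga] at hg; simp at hg
      | some a =>
        rw [hga] at hg; simp at hg
        subst hg
        have hnfa := nf_embed (hnf a (mem_of_getElem?' hga))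
        exact hnfa (rewrite_of_redex_subterm hsub ⟨liftRule r0, ⟨r0, hr0, rfl⟩, θ, rfl⟩)

/-! ### PosD and PosGT lemmas -/

theorem posD_var (R : Set (Rule σ V)) (x : V) : PosD R (Term.var x) = ∅ := by
  ext π
  simp only [Set.mem_empty_iff_false, iff_false]
  rintro ⟨u, hu, g, us, rfl, _⟩
  cases π with
  | nil => simp at hu
  | cons i τ => simp at hu

theorem mem_posD_nil {R : Set (Rule σ V)} {f : σ} {ts : List (Term σ V)} :
    [] ∈ PosD R (Term.fn f ts) ↔ Defined R f := by
  constructor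
  · rintro ⟨u, hu, g, us, rfl, hg⟩
    simp at hu
    obtain ⟨rfl, -⟩ := hu
    exact hg
  · intro hf
    exact ⟨Term.fn f ts, rfl, f, ts, rfl, hf⟩

theorem mem_posD_cons {R : Set (Rule σ V)} {f : σ} {ts : List (Term σ V)} {i : ℕ} {π : List ℕ} :
    (i :: π) ∈ PosD R (Term.fn f ts) ↔ ∃ a, ts[i]? = some a ∧ π ∈ PosD R a := by
  constructor
  · rintro ⟨u, hu, hd⟩
    rw [Term.subtermAt_fn_cons] at hu
    cases hg : ts[i]? with
    | none => rw [hg] at hu; simp at hu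
    | some a =>
      rw [hg] at hu; simp at hu
      exact ⟨a, rfl, u, hu, hd⟩
  · rintro ⟨a, hg, u, hu, hd⟩
    refine ⟨u, ?_, hd⟩
    rw [Term.subtermAt_fn_cons, hg]
    simpa using hu

theorem posGT_nil_right {π : List ℕ} (h : π ≠ []) : PosGT π [] := ⟨π, h, rfl⟩

theorem not_posGT_nil_left (π : List ℕ) : ¬ PosGT [] π := by
  rintro ⟨π', h1, h2⟩
  simp at h2
  exact h1 h2.2

theorem posGT_cons_iff {i j : ℕ} {τ π : List ℕ} :
    PosGT (i :: τ) (j :: π) ↔ j = i ∧ PosGT τ π := by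
  constructor
  · rintro ⟨π', h1, h2⟩
    simp at h2
    exact ⟨h2.1, π', h1, h2.2⟩
  · rintro ⟨rfl, π', h1, h2⟩
    exact ⟨π', h1, by simp [h2]⟩

theorem not_posGT_cons_nil {i : ℕ} {τ : List ℕ} (π : List ℕ) : ¬ PosGT π (i :: τ) → True := fun _ => trivial

/-! ### Construction of maximal structural dependency chains -/

theorem msdc_empty {R : Set (Rule σ V)} {r : Term σ V} (h : PosD R r = ∅) : MSDC R r [] := by
  refine ⟨⟨by simp, List.isChain_nil⟩, Or.inl ⟨rfl, h⟩⟩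

theorem msdc_ne_nil {R : Set (Rule σ V)} {r : Term σ V} {c : List (List ℕ)} {π : List ℕ}
    (h : MSDC R r c) (hπ : π ∈ PosD R r) : c ≠ [] := by
  rcases h.2 with ⟨_, hemp⟩ | ⟨π₁, rest, rfl, _⟩
  · rw [hemp] at hπ; cases hπ
  · simp

theorem lift_msdc {R : Set (Rule σ V)} {f : σ} {ts : List (Term σ V)} {i : ℕ} {a : Term σ V}
    (hia : ts[i]? = some a) {c : List (List ℕ)} (h : MSDC R a c) (hc : c ≠ [])
    (tail : List (List ℕ))
    (htail : (Defined R f ∧ tail = [[]]) ∨ (¬ Defined R f ∧ tail = [])) :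
    MSDC R (Term.fn f ts) (c.map (i :: ·) ++ tail) := by
  obtain ⟨⟨hmem, hchain⟩, hmax⟩ := h
  rcases hmax with ⟨rfl, _⟩ | ⟨π₁, rest, rfl, hmax⟩
  · exact absurd rfl hc
  constructor
  · constructor
    · intro π hπ
      rcases List.mem_append.1 hπ with hπ | hπ
      · obtain ⟨τ, hτ, rfl⟩ := List.mem_map.1 hπ
        exact mem_posD_cons.2 ⟨a, hia, hmem τ hτ⟩
      · rcases htail with ⟨hd, rfl⟩ | ⟨hd, rfl⟩
        · simp at hπ
          subst hπ
          exact mem_posD_nil.2 hd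
        · cases hπ
    · rcases htail with ⟨hd, rfl⟩ | ⟨hd, rfl⟩
      · refine List.IsChain.append ?_ (by simp) ?_
        · exact (List.isChain_map _).2 (hchain.imp fun _ _ h => posGT_cons_iff.2 ⟨rfl, h⟩)
        · intro x hx y hy
          simp at hy
          subst hy
          obtain ⟨x', _, rfl⟩ := List.mem_map.1 (List.mem_of_mem_getLast? hx)
          exact posGT_nil_right (by simp)
      · rw [List.append_nil]
        exact (List.isChain_map _).2 (hchain.imp fun _ _ h => posGT_cons_iff.2 ⟨rfl, h⟩)
  · refine Or.inr ⟨i :: π₁, rest.map (i :: ·) ++ tail, by simp, ?_⟩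
    intro π hπ
    cases π with
    | nil =>
      constructor
      · exact not_posGT_nil_left _
      · intro _
        rcases htail with ⟨hd, rfl⟩ | ⟨hd, rfl⟩
        · simp
        · exact absurd (mem_posD_nil.1 hπ) hd
    | cons j τ =>
      obtain ⟨a', hja', hτ⟩ := mem_posD_cons.1 hπ
      by_cases hij : j = i
      · subst hij
        rw [hja'] at hia
        injection hia with hia
        subst hia
        have := hmax τ hτ
        constructor
        · intro hgt
          exact this.1 (posGT_cons_iff.1 hgt).2
        · intro hgt
          have := this.2 (posGT_cons_iff.1 hgt).2
          exact List.mem_append.2 (Or.inl (List.mem_map.2 ⟨τ, this, rfl⟩))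
      · constructor
        · intro hgt
          exact hij (posGT_cons_iff.1 hgt).1.symm
        · intro hgt
          exact absurd (posGT_cons_iff.1 hgt).1 hij

/-- Existence of a maximal structural dependency chain through a given defined
position. -/
theorem exists_msdc_through (R : Set (Rule σ V)) :
    ∀ (r : Term σ V) (π : List ℕ), π ∈ PosD R r →
    ∃ c us, MSDC R r c ∧ π ∈ c ∧
      List.Forall₂ (fun τ (u : Term σ V) => r.subtermAt τ = some u) c us := by
  classical
  intro r
  induction r using Term.my_ind with
  | hv x =>
    intro π hπ
    rw [posD_var] at hπ
    cases hπ
  | hf f ts ih =>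
    intro π hπ
    cases π with
    | cons i τ =>
      obtain ⟨a, hia, hτ⟩ := mem_posD_cons.1 hπ
      obtain ⟨c1, us1, hm1, hπ1, hf1⟩ := ih a (mem_of_getElem?' hia) τ hτ
      have hc1 : c1 ≠ [] := by rintro rfl; cases hπ1
      by_cases hd : Defined R f
      · refine ⟨c1.map (i :: ·) ++ [[]], us1 ++ [Term.fn f ts],
          lift_msdc hia hm1 hc1 _ (Or.inl ⟨hd, rfl⟩), ?_, ?_⟩
        · exact List.mem_append.2 (Or.inl (List.mem_map.2 ⟨τ, hπ1, rfl⟩))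
        · refine List.rel_append ?_ ?_
          · rw [List.forall₂_map_left_iff]
            refine hf1.imp fun h => ?_
            rw [Term.subtermAt_fn_cons, hia]
            simpa using h
          · simp
      · refine ⟨c1.map (i :: ·) ++ [], us1 ++ [],
          lift_msdc hia hm1 hc1 _ (Or.inr ⟨hd, rfl⟩), ?_, ?_⟩
        · exact List.mem_append.2 (Or.inl (List.mem_map.2 ⟨τ, hπ1, rfl⟩))
        · refine List.rel_append ?_ List.Forall₂.nil
          rw [List.forall₂_map_left_iff]
          refine hf1.imp fun h => ?_
          rw [Term.subtermAt_fn_cons, hia]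
          simpa using h
    | nil =>
      have hd : Defined R f := mem_posD_nil.1 hπ
      by_cases hargs : ∃ (i : ℕ) (a : Term σ V) (τ : List ℕ), ts[i]? = some a ∧ τ ∈ PosD R a
      · obtain ⟨i, a, τ, hia, hτ⟩ := hargs
        obtain ⟨c1, us1, hm1, hπ1, hf1⟩ := ih a (mem_of_getElem?' hia) τ hτ
        have hc1 : c1 ≠ [] := by rintro rfl; cases hπ1
        refine ⟨c1.map (i :: ·) ++ [[]], us1 ++ [Term.fn f ts],
          lift_msdc hia hm1 hc1 _ (Or.inl ⟨hd, rfl⟩), by simp, ?_⟩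
        refine List.rel_append ?_ ?_
        · rw [List.forall₂_map_left_iff]
          refine hf1.imp fun h => ?_
          rw [Term.subtermAt_fn_cons, hia]
          simpa using h
        · simp
      · refine ⟨[[]], [Term.fn f ts], ⟨⟨by simpa using hπ, List.isChain_singleton _⟩, ?_⟩, by simp, by simp⟩
        refine Or.inr ⟨[], [], rfl, ?_⟩
        intro π' hπ'
        cases π' with
        | nil => exact ⟨not_posGT_nil_left _, fun h => absurd h (not_posGT_nil_left _)⟩
        | cons j τ' =>
          obtain ⟨a, hja, hτ'⟩ := mem_posD_cons.1 hπ'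
          exact absurd ⟨j, a, τ', hja, hτ'⟩ hargs

theorem exists_msdc (R : Set (Rule σ V)) (r : Term σ V) :
    ∃ c us, MSDC R r c ∧
      List.Forall₂ (fun τ (u : Term σ V) => r.subtermAt τ = some u) c us := by
  classical
  by_cases h : ∃ π, π ∈ PosD R r
  · obtain ⟨π, hπ⟩ := h
    obtain ⟨c, us, h1, _, h3⟩ := exists_msdc_through R r π hπ
    exact ⟨c, us, h1, h3⟩
  · refine ⟨[], [], msdc_empty ?_, List.Forall₂.nil⟩
    ext π
    simp only [Set.mem_empty_iff_false, iff_false]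
    exact fun hπ => h ⟨π, hπ⟩

/-! ### Splitting derivations from an `fn`-term -/

theorem mem_zip_of_getElem? {α β : Type*} :
    ∀ (l₁ : List α) (l₂ : List β) (k : ℕ) (a : α) (b : β),
      l₁[k]? = some a → l₂[k]? = some b → (a, b) ∈ l₁.zip l₂ := by
  intro l₁
  induction l₁ with
  | nil => intro l₂ k a b h; simp at h
  | cons x l₁ ih =>
    intro l₂ k a b h1 h2
    cases l₂ with
    | nil => simp at h2
    | cons y l₂ =>
      cases k with
      | zero =>
        simp at h1 h2
        subst h1; subst h2
        simp
      | succ k =>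
        simp at h1 h2
        exact List.mem_cons_of_mem _ (ih l₂ k a b h1 h2)

/-- Splitting an innermost prefix from a term with root `f`: either all steps
are below the root, or there is a first root step. -/
theorem psplit {R : Set (Rule σ V)} :
    ∀ (p : ℕ) (f : σ) (ss : List (Term σ V)) (w : Term σ V),
    iterRel (InnermostRewrite R) p (Term.fn f ss) w →
    (∃ ts', w = Term.fn f ts' ∧ ss.length = ts'.length ∧
      (∀ (k : ℕ) (a : Term σ V), ss[k]? = some a →
        ∃ b q, ts'[k]? = some b ∧ q ≤ p ∧ iterRel (InnermostRewrite R) q a b)) ∨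
    (∃ (ts' : List (Term σ V)) (ρ : Rule σ V) (δ : V → Term σ V) (p2 : ℕ), ρ ∈ R ∧
      ss.length = ts'.length ∧
      (∀ (k : ℕ) (a : Term σ V), ss[k]? = some a →
        ∃ b, ts'[k]? = some b ∧ Relation.ReflTransGen (InnermostRewrite R) a b) ∧
      Term.fn f ts' = Term.subst δ ρ.lhs ∧ IsInnermostRedex R (Term.subst δ ρ.lhs) ∧
      p2 < p ∧ iterRel (InnermostRewrite R) p2 (Term.subst δ ρ.rhs) w) := by
  intro p
  induction p with
  | zero =>
    intro f ss w h
    rw [iterRel_zero] at h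
    subst h
    exact Or.inl ⟨ss, rfl, rfl, fun k a hk => ⟨a, 0, hk, le_refl 0, rfl⟩⟩
  | succ p ih =>
    rintro f ss w ⟨s1, hstep, hrest⟩
    obtain ⟨π, r, hr, θ, hsub, hin, hrep⟩ := hstep
    cases π with
    | nil =>
      simp at hsub hrep
      refine Or.inr ⟨ss, r, θ, p, hr, rfl,
        fun k a hk => ⟨a, hk, Relation.ReflTransGen.refl⟩, hsub, hsub ▸ hin, by omega, ?_⟩
      rwa [hrep]
    | cons i τ =>
      rw [Term.subtermAt_fn_cons] at hsub
      cases hg : ss[i]? with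
      | none => rw [hg] at hsub; simp at hsub
      | some a =>
        rw [hg] at hsub; simp at hsub
        have hrep' := hrep
        simp only [Term.replaceAt, hg] at hrep'
        cases hb : a.replaceAt τ (Term.subst θ r.rhs) with
        | none => rw [hb] at hrep'; simp at hrep'
        | some b =>
          rw [hb] at hrep'; simp at hrep'
          have hstepa : InnermostRewrite R a b := ⟨τ, r, hr, θ, hsub, hin, hb⟩
          rw [← hrep'] at hrest
          rcases ih f (ss.set i b) w hrest with
            ⟨ts', hw, hlen, hargs⟩ | ⟨ts', ρ, δ, p2, hρ, hlen, hargs, heq, hired, hp2, hcont⟩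
          · refine Or.inl ⟨ts', hw, by simpa using hlen, fun k x hk => ?_⟩
            by_cases hki : k = i
            · subst hki
              rw [hg] at hk
              injection hk with hk
              subst hk
              have hkset : (ss.set k b)[k]? = some b := by
                have hklen : k < ss.length := (List.getElem?_eq_some_iff.1 hg).1
                simp [List.getElem?_set_self hklen]
              obtain ⟨y, q, hy, hq, hiter⟩ := hargs k b hkset
              exact ⟨y, q + 1, hy, by omega, ⟨b, hstepa, hiter⟩⟩
            · obtain ⟨y, q, hy, hq, hiter⟩ := hargs k x (by rwa [List.getElem?_set_ne (fun h => hki h.symm)])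
              exact ⟨y, q, hy, by omega, hiter⟩
          · refine Or.inr ⟨ts', ρ, δ, p2, hρ, by simpa using hlen, fun k x hk => ?_, heq, hired,
              by omega, hcont⟩
            by_cases hki : k = i
            · subst hki
              rw [hg] at hk
              injection hk with hk
              subst hk
              have hkset : (ss.set k b)[k]? = some b := by
                have hklen : k < ss.length := (List.getElem?_eq_some_iff.1 hg).1
                simp [List.getElem?_set_self hklen]
              obtain ⟨y, hy, hrt⟩ := hargs k b hkset
              exact ⟨y, hy, Relation.ReflTransGen.head hstepa hrt⟩
            · exact hargs k x (by rwa [List.getElem?_set_ne (fun h => hki h.symm)])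

/-- Splitting a parallel-innermost derivation from a term with root `f`. -/
theorem split {R : Set (Rule σ V)} :
    ∀ (N : ℕ) (f : σ) (ss : List (Term σ V)) (u' : Term σ V),
    iterRel (ParInnermost R) N (Term.fn f ss) u' → 1 ≤ N →
    (∃ (k : ℕ) (a b : Term σ V), ss[k]? = some a ∧ iterRel (ParInnermost R) N a b) ∨
    (∃ (m : ℕ) (ts' : List (Term σ V)) (ρ : Rule σ V) (δ : V → Term σ V) (q : ℕ)
        (w' : Term σ V), m < N ∧ ρ ∈ R ∧ ss.length = ts'.length ∧
      (∀ (k : ℕ) (a : Term σ V), ss[k]? = some a →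
        ∃ b, ts'[k]? = some b ∧ Relation.ReflTransGen (InnermostRewrite R) a b) ∧
      (m = 0 ∨ ∃ (k : ℕ) (a b : Term σ V), ss[k]? = some a ∧ iterRel (ParInnermost R) m a b) ∧
      Term.fn f ts' = Term.subst δ ρ.lhs ∧ IsInnermostRedex R (Term.subst δ ρ.lhs) ∧
      iterRel (InnermostRewrite R) q (Term.subst δ ρ.rhs) w' ∧
      iterRel (ParInnermost R) (N - m - 1) w' u') := by
  classical
  intro N
  induction N with
  | zero => intro f ss u' _ h; omega
  | succ n ih =>
    rintro f ss u' ⟨u1, hstep, hrest⟩ _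
    cases hstep with
    | redex hTG hired hst =>
      obtain ⟨ρ, hρ, δ, heq, hu1⟩ := root_step_of_innermost hired hst
      refine Or.inr ⟨0, ss, ρ, δ, 0, u1, by omega, hρ, rfl,
        fun k a hk => ⟨a, hk, Relation.ReflTransGen.refl⟩, Or.inl rfl, heq, heq ▸ hired,
        by rw [iterRel_zero, hu1], by simpa using hrest⟩
    | congr f' ss' ts1 hTG hlen hpair =>
      have hp : ∀ (k : ℕ) (a b : Term σ V), ss[k]? = some a → ts1[k]? = some b →
          (a = b ∧ NormalForm R a) ∨ ParInnermost R a b := by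
        intro k a b h1 h2
        by_cases hab : a = b ∧ NormalForm R a
        · exact Or.inl hab
        · exact Or.inr (hpair (a, b) (mem_zip_of_getElem? _ _ k a b h1 h2) hab)
      by_cases hall : ∀ (k : ℕ) (a b : Term σ V), ss[k]? = some a → ts1[k]? = some b →
          a = b ∧ NormalForm R a
      · -- trivial (stuttering) step: all arguments are equal normal forms
        have hss : ts1 = ss := by
          apply List.ext_getElem?
          intro k
          cases h1 : ss[k]? with
          | none =>
            have h2 := List.getElem?_eq_none_iff.1 h1
            exact List.getElem?_eq_none_iff.2 (by omega)
          | some a =>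
            have hklen : k < ts1.length := by
              have := (List.getElem?_eq_some_iff.1 h1).1
              omega
            have hb : ts1[k]? = some (ts1[k]'hklen) := List.getElem?_eq_some_iff.2 ⟨hklen, rfl⟩
            rw [hb]
            exact congrArg some (hall k a _ h1 hb).1.symm
        rw [hss] at hTG hrest
        have hnfargs : ∀ (k : ℕ) (a : Term σ V), ss[k]? = some a → NormalForm R a :=
          fun k a hk => (hall k a a hk (hss ▸ hk)).2
        obtain ⟨s1, hst1, hrtg1⟩ := Relation.TransGen.head'_iff.1 hTG
        obtain ⟨hired, ρ, hρ, δ, heq, hs1⟩ := args_nf_root_redex hnfargs hst1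
        obtain ⟨q, hq⟩ := rtg_iterRel hrtg1
        refine Or.inr ⟨0, ss, ρ, δ, q, Term.fn f ss, by omega, hρ, rfl,
          fun k a hk => ⟨a, hk, Relation.ReflTransGen.refl⟩, Or.inl rfl, heq, heq ▸ hired,
          ?_, by simpa using hrest⟩
        rw [← hs1]
        exact hq
      · push_neg at hall
        obtain ⟨k0, a0, b0, hk0, hb0, hnab⟩ := hall
        have hpar0 : ParInnermost R a0 b0 := by
          rcases hp k0 a0 b0 hk0 hb0 with ⟨he, hnf⟩ | h
          · exact absurd hnf (hnab he)
          · exact h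
        rcases Nat.eq_zero_or_pos n with rfl | hn
        · rw [iterRel_zero] at hrest
          subst hrest
          exact Or.inl ⟨k0, a0, b0, hk0, ⟨b0, hpar0, rfl⟩⟩
        · rcases ih f ts1 u' hrest (by omega) with
            ⟨k, a1, b, hk1, hder⟩ | ⟨m, ts'', ρ, δ, q, w', hm, hρ, hlen2, hargs, htr, heq, hired, hpre, hcont⟩
          · have hklen : k < ss.length := by
              have := (List.getElem?_eq_some_iff.1 hk1).1
              omega
            obtain ⟨a0', hk0'⟩ : ∃ a, ss[k]? = some a :=
              ⟨ss[k]'hklen, List.getElem?_eq_some_iff.2 ⟨hklen, rfl⟩⟩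
            rcases hp k a0' a1 hk0' hk1 with ⟨heq01, hnf⟩ | hpar
            · subst heq01
              obtain ⟨n', rfl⟩ : ∃ n', n = n' + 1 := ⟨n - 1, by omega⟩
              obtain ⟨c, hc, _⟩ := hder
              exact absurd hc (nf_not_par hnf)
            · exact Or.inl ⟨k, a0', b, hk0', ⟨a1, hpar, hder⟩⟩
          · refine Or.inr ⟨m + 1, ts'', ρ, δ, q, w', by omega, hρ, by omega, ?_, ?_, heq, hired,
              hpre, by
                have : n + 1 - (m + 1) - 1 = n - m - 1 := by omega
                rw [this]; exact hcont⟩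
            · intro k a hk
              have hklen : k < ts1.length := by
                have := (List.getElem?_eq_some_iff.1 hk).1
                omega
              obtain ⟨a1, hk1⟩ : ∃ a1, ts1[k]? = some a1 :=
                ⟨ts1[k]'hklen, List.getElem?_eq_some_iff.2 ⟨hklen, rfl⟩⟩
              obtain ⟨b, hb, hrt⟩ := hargs k a1 hk1
              refine ⟨b, hb, Relation.ReflTransGen.trans ?_ hrt⟩
              rcases hp k a a1 hk hk1 with ⟨rfl, _⟩ | hpar
              · rfl
              · exact (par_transGen hpar).to_reflTransGen
            · rcases Nat.eq_zero_or_pos m with rfl | hm0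
              · exact Or.inr ⟨k0, a0, b0, hk0, ⟨b0, hpar0, rfl⟩⟩
              · rcases htr with rfl | ⟨k, a1, b, hk1, hder1⟩
                · omega
                · have hklen : k < ss.length := by
                    have := (List.getElem?_eq_some_iff.1 hk1).1
                    omega
                  obtain ⟨a0', hk0'⟩ : ∃ a, ss[k]? = some a :=
                    ⟨ss[k]'hklen, List.getElem?_eq_some_iff.2 ⟨hklen, rfl⟩⟩
                  rcases hp k a0' a1 hk0' hk1 with ⟨heq01, hnf⟩ | hpar
                  · subst heq01
                    exact absurd (nf_iterRel_par hnf hder1) (by omega)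
                  · exact Or.inr ⟨k, a0', b, hk0', ⟨a1, hpar, hder1⟩⟩

/-! ### Statement of the two mutually-recursive lemmas -/

variable (R : Set (Rule σ V))

/-- A bound `m` is realized by some chain tree reachable from the sharp term `s`. -/
def CTb (s : Term (SharpSym σ) V) (m : ℕ) : Prop :=
  m = 0 ∨ ∃ w T, Relation.ReflTransGen (InnermostRewrite (liftRules R)) s w ∧
    IsChainTree (DTparSet R) (liftRules R) T w ∧ (m : ℕ∞) ≤ treeCount T (DTparSet R)

def MLstmt (n p s : ℕ) : Prop :=
  ∀ (r : Term σ V) (θ : V → Term σ V) (w u' : Term σ V) (p' : ℕ),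
    r.size ≤ s → p' ≤ p →
    (∀ x, Term.VarIn x r → NormalForm R (θ x)) →
    iterRel (InnermostRewrite R) p' (Term.subst θ r) w →
    iterRel (ParInnermost R) n w u' →
    ∃ (c : List (List ℕ)) (us : List (Term σ V)) (ns : List ℕ),
      MSDC R r c ∧ List.Forall₂ (fun π (u : Term σ V) => r.subtermAt π = some u) c us ∧
      ns.length = us.length ∧ n ≤ ns.sum ∧
      ∀ (i : ℕ) (u : Term σ V) (m : ℕ), us[i]? = some u → ns[i]? = some m →
        CTb R (Term.sharp R (Term.subst θ u)) m

def RTstmt (n p : ℕ) : Prop :=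
  ∀ ρ ∈ R, ∀ (δ : V → Term σ V) (w u' : Term σ V),
    IsInnermostRedex R (Term.subst δ ρ.lhs) →
    iterRel (InnermostRewrite R) p (Term.subst δ ρ.rhs) w →
    iterRel (ParInnermost R) n w u' →
    ∃ T, IsChainTree (DTparSet R) (liftRules R) T
        (Term.subst (fun x => Term.embed (δ x)) (Term.sharp R ρ.lhs)) ∧
      ((n : ℕ∞) + 1) ≤ treeCount T (DTparSet R)

/-! ### Counting nodes in assembled trees -/

theorem lemCount :
    ∀ (ms : List ℕ) (g : ℕ → Set (List ℕ)),
      (∀ i : ℕ, ((ms[i]?.getD 0 : ℕ) : ℕ∞) ≤ (g i).encard) →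
      ((ms.sum : ℕ) : ℕ∞) ≤
        Set.encard {p : List ℕ | ∃ i p', i < ms.length ∧ p = i :: p' ∧ p' ∈ g i} := by
  intro ms
  induction ms with
  | nil => intro g _; simp
  | cons m ms ih =>
    intro g hg
    have h0 : ((m : ℕ) : ℕ∞) ≤ (g 0).encard := by simpa using hg 0
    have hrest := ih (fun i => g (i + 1)) (fun i => by simpa using hg (i + 1))
    set S' : Set (List ℕ) :=
      {p : List ℕ | ∃ i p', i < ms.length ∧ p = i :: p' ∧ p' ∈ (fun i => g (i + 1)) i} with hS'
    set A : Set (List ℕ) := (fun p => (0 : ℕ) :: p) '' g 0 with hA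
    set B : Set (List ℕ) :=
      (fun p : List ℕ => match p with | [] => ([] : List ℕ) | i :: p' => (i + 1) :: p') '' S'
      with hB
    have hsplit : {p : List ℕ | ∃ i p', i < (m :: ms).length ∧ p = i :: p' ∧ p' ∈ g i}
        = A ∪ B := by
      ext p
      constructor
      · rintro ⟨i, p', hi, rfl, hp'⟩
        cases i with
        | zero => exact Or.inl ⟨p', hp', rfl⟩
        | succ j =>
          refine Or.inr ⟨j :: p', ⟨j, p', by simpa using hi, rfl, hp'⟩, rfl⟩
      · rintro (⟨p', hp', rfl⟩ | ⟨q, ⟨j, p', hj, rfl, hp'⟩, rfl⟩)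
        · exact ⟨0, p', by simp, rfl, hp'⟩
        · exact ⟨j + 1, p', by simp; omega, rfl, hp'⟩
    have hdisj : Disjoint A B := by
      rw [Set.disjoint_left]
      rintro p ⟨p', _, rfl⟩ ⟨q, ⟨j, p'', _, rfl, _⟩, hq⟩
      simp at hq
    have hAcard : (A.encard) = (g 0).encard :=
      Set.InjOn.encard_image (fun a _ b _ h => by injection h)
    have hBcard : (B.encard) = S'.encard := by
      apply Set.InjOn.encard_image
      rintro p ⟨i, p', _, rfl, _⟩ q ⟨j, q', _, rfl, _⟩ h
      simp at h
      simp [h.1, h.2]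
    rw [hsplit, Set.encard_union_eq hdisj, hAcard, hBcard]
    have : ((m + ms.sum : ℕ) : ℕ∞) = ((m : ℕ) : ℕ∞) + ((ms.sum : ℕ) : ℕ∞) := by push_cast; rfl
    rw [List.sum_cons, this]
    exact add_le_add h0 hrest

theorem forall₂_get_right {α β : Type*} {Rr : α → β → Prop} :
    ∀ {as : List α} {bs : List β}, List.Forall₂ Rr as bs →
      ∀ {i : ℕ} {b : β}, bs[i]? = some b → ∃ a, as[i]? = some a ∧ Rr a b := by
  intro as bs h
  induction h with
  | nil => intro i b h; simp at h
  | cons h1 h2 ih =>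
    intro i b hb
    cases i with
    | zero =>
      simp at hb
      subst hb
      exact ⟨_, by simp, h1⟩
    | succ i =>
      simp at hb
      obtain ⟨a, ha, hr⟩ := ih hb
      exact ⟨a, by simpa using ha, hr⟩

theorem mem_le_sum_map {α : Type*} (g : α → ℕ) :
    ∀ (c : List α) (a : α), a ∈ c → g a ≤ (c.map g).sum := by
  intro c
  induction c with
  | nil => intro a ha; cases ha
  | cons x c ih =>
    intro a ha
    rcases List.mem_cons.1 ha with rfl | ha
    · simp
    · have := ih a ha
      simp
      omega

/-- The substitution of an innermost redex instance is normal on the variables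
of the left-hand side. -/
theorem innermost_redex_subst_nf {ρ : Rule σ V} (hρlv : ¬ ρ.lhs.isVar)
    {δ : V → Term σ V} (h : IsInnermostRedex R (Term.subst δ ρ.lhs)) :
    ∀ x, Term.VarIn x ρ.lhs → NormalForm R (δ x) := by
  intro x hx
  obtain ⟨π, hπ⟩ := subterm_var_of_varIn hx
  have hπne : π ≠ [] := by
    rintro rfl
    simp at hπ
    exact hρlv ⟨x, hπ⟩
  have := Term.subtermAt_subst (θ := δ) π ρ.lhs (Term.var x) hπ
  exact innermost_subterm_nf h this hπne

/-! ### Helpers for the main lemma -/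

theorem chain_ne_of_active (hWf : ∀ r ∈ R, ¬ r.lhs.isVar) {tk : Term σ V} {θ : V → Term σ V}
    (hθtk : ∀ x, Term.VarIn x tk → NormalForm R (θ x))
    {qk n0 : ℕ} {a' b : Term σ V} (hq : iterRel (InnermostRewrite R) qk (Term.subst θ tk) a')
    (hd : iterRel (ParInnermost R) n0 a' b) (hpos : 1 ≤ qk + n0) :
    ∃ π, π ∈ PosD R tk := by
  rcases Nat.eq_zero_or_pos qk with rfl | hqk
  · rw [iterRel_zero] at hq
    subst hq
    obtain ⟨n0', rfl⟩ : ∃ n0', n0 = n0' + 1 := ⟨n0 - 1, by omega⟩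
    obtain ⟨a'', hstep, _⟩ := hd
    obtain ⟨c0, h1, _⟩ := Relation.TransGen.head'_iff.1 (par_transGen hstep)
    exact posD_nonempty_of_step hWf hθtk h1
  · obtain ⟨qk', rfl⟩ : ∃ qk', qk = qk' + 1 := ⟨qk - 1, by omega⟩
    obtain ⟨a'', hstep, _⟩ := hq
    exact posD_nonempty_of_step hWf hθtk hstep

theorem ct_append {θ : V → Term σ V} {usk : List (Term σ V)} {nsk : List ℕ}
    (hlenk : nsk.length = usk.length)
    (hctk : ∀ (i : ℕ) (u : Term σ V) (m : ℕ), usk[i]? = some u → nsk[i]? = some m →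
      CTb R (Term.sharp R (Term.subst θ u)) m)
    (u0 : Term σ V) (m0 : ℕ) (hct0 : CTb R (Term.sharp R (Term.subst θ u0)) m0) :
    ∀ (i : ℕ) (u : Term σ V) (m : ℕ), (usk ++ [u0])[i]? = some u →
      (nsk ++ [m0])[i]? = some m → CTb R (Term.sharp R (Term.subst θ u)) m := by
  intro i u m hu hm
  by_cases hi : i < usk.length
  · rw [List.getElem?_append_left hi] at hu
    rw [List.getElem?_append_left (by omega)] at hm
    exact hctk i u m hu hm
  · rw [List.getElem?_append_right (by omega)] at hu
    rw [List.getElem?_append_right (by omega)] at hm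
    have hi2 : i - usk.length = 0 := by
      rcases Nat.lt_or_ge (i - usk.length) 1 with h | h
      · omega
      · rw [List.getElem?_eq_none_iff.2 (by simp; omega)] at hu
        cases hu
    rw [hi2] at hu
    rw [hlenk] at hm
    rw [hi2] at hm
    simp at hu hm
    subst hu
    subst hm
    exact hct0

/-- Conclude the main lemma with a maximal chain through the root. -/
theorem ml_conclude_root {θ : V → Term σ V} {f : σ} {ts : List (Term σ V)} (n nval : ℕ)
    (hge : n ≤ nval) (hdf : Defined R f)
    (hctroot : CTb R (Term.sharp R (Term.subst θ (Term.fn f ts))) nval) :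
    ∃ (cs : List (List ℕ)) (us : List (Term σ V)) (ns : List ℕ),
      MSDC R (Term.fn f ts) cs ∧
      List.Forall₂ (fun π (u : Term σ V) => (Term.fn f ts).subtermAt π = some u) cs us ∧
      ns.length = us.length ∧ n ≤ ns.sum ∧
      ∀ (i : ℕ) (u : Term σ V) (m : ℕ), us[i]? = some u → ns[i]? = some m →
        CTb R (Term.sharp R (Term.subst θ u)) m := by
  obtain ⟨cs, us, hmsdc, hmem, hf2⟩ :=
    exists_msdc_through R (Term.fn f ts) [] (mem_posD_nil.2 hdf)
  refine ⟨cs, us, cs.map (fun π => if π = [] then nval else 0), hmsdc, hf2, ?_, ?_, ?_⟩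
  · rw [List.length_map, hf2.length_eq]
  · have := mem_le_sum_map (fun π => if π = [] then nval else 0) cs [] hmem
    simp at this
    omega
  · intro i u m hu hm
    rw [List.getElem?_map] at hm
    cases hc : cs[i]? with
    | none => rw [hc] at hm; simp at hm
    | some π =>
      rw [hc] at hm
      have hm2 : some (if π = [] then nval else 0) = some m := hm
      injection hm2 with hm
      by_cases hπ : π = []
      · subst hπ
        obtain ⟨π0, hπ0, hsubu⟩ := forall₂_get_right hf2 hu
        rw [hc] at hπ0
        injection hπ0 with hπ0
        subst hπ0
        simp at hsubu
        rw [← hm, if_pos rfl, ← hsubu]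
        exact hctroot
      · rw [← hm, if_neg hπ]
        exact Or.inl rfl

/-- Conclude the main lemma with a chain lifted from argument `k`, adding the
root position. -/
theorem ml_conclude_lift {θ : V → Term σ V} {f : σ} {ts : List (Term σ V)} {k : ℕ}
    {tk : Term σ V} (htk : ts[k]? = some tk) (n : ℕ)
    {ck : List (List ℕ)} {usk : List (Term σ V)} {nsk : List ℕ}
    (hmk : MSDC R tk ck) (hck : ck ≠ [])
    (hf2k : List.Forall₂ (fun π (u : Term σ V) => tk.subtermAt π = some u) ck usk)
    (hlenk : nsk.length = usk.length)
    (hctk : ∀ (i : ℕ) (u : Term σ V) (m : ℕ), usk[i]? = some u → nsk[i]? = some m →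
      CTb R (Term.sharp R (Term.subst θ u)) m)
    (hdf : Defined R f) (m0 : ℕ)
    (hct0 : CTb R (Term.sharp R (Term.subst θ (Term.fn f ts))) m0)
    (hsum : n ≤ nsk.sum + m0) :
    ∃ (cs : List (List ℕ)) (us : List (Term σ V)) (ns : List ℕ),
      MSDC R (Term.fn f ts) cs ∧
      List.Forall₂ (fun π (u : Term σ V) => (Term.fn f ts).subtermAt π = some u) cs us ∧
      ns.length = us.length ∧ n ≤ ns.sum ∧
      ∀ (i : ℕ) (u : Term σ V) (m : ℕ), us[i]? = some u → ns[i]? = some m →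
        CTb R (Term.sharp R (Term.subst θ u)) m := by
  refine ⟨ck.map (k :: ·) ++ [[]], usk ++ [Term.fn f ts], nsk ++ [m0],
    lift_msdc htk hmk hck _ (Or.inl ⟨hdf, rfl⟩), ?_, ?_, ?_, ct_append R hlenk hctk _ _ hct0⟩
  · refine List.rel_append ?_ ?_
    · rw [List.forall₂_map_left_iff]
      refine hf2k.imp fun h => ?_
      rw [Term.subtermAt_fn_cons, htk]
      simpa using h
    · simp
  · simp [hlenk, hf2k.length_eq]
  · rw [List.sum_append]
    simp
    omega

/-- Conclude the main lemma with a chain lifted from argument `k` when the root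
symbol is not defined. -/
theorem ml_conclude_lift_nodef {θ : V → Term σ V} {f : σ} {ts : List (Term σ V)} {k : ℕ}
    {tk : Term σ V} (htk : ts[k]? = some tk) (n : ℕ)
    {ck : List (List ℕ)} {usk : List (Term σ V)} {nsk : List ℕ}
    (hmk : MSDC R tk ck) (hck : ck ≠ [])
    (hf2k : List.Forall₂ (fun π (u : Term σ V) => tk.subtermAt π = some u) ck usk)
    (hlenk : nsk.length = usk.length)
    (hctk : ∀ (i : ℕ) (u : Term σ V) (m : ℕ), usk[i]? = some u → nsk[i]? = some m →
      CTb R (Term.sharp R (Term.subst θ u)) m)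
    (hdf : ¬ Defined R f) (hsum : n ≤ nsk.sum) :
    ∃ (cs : List (List ℕ)) (us : List (Term σ V)) (ns : List ℕ),
      MSDC R (Term.fn f ts) cs ∧
      List.Forall₂ (fun π (u : Term σ V) => (Term.fn f ts).subtermAt π = some u) cs us ∧
      ns.length = us.length ∧ n ≤ ns.sum ∧
      ∀ (i : ℕ) (u : Term σ V) (m : ℕ), us[i]? = some u → ns[i]? = some m →
        CTb R (Term.sharp R (Term.subst θ u)) m := by
  refine ⟨ck.map (k :: ·), usk, nsk, ?_, ?_, hlenk, hsum, hctk⟩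
  · have := lift_msdc htk hmk hck [] (Or.inr ⟨hdf, rfl⟩)
    simpa using this
  · rw [List.forall₂_map_left_iff]
    refine hf2k.imp fun h => ?_
    rw [Term.subtermAt_fn_cons, htk]
    simpa using h

/-- Lifting the argument-wise reductions to a reduction between sharp terms. -/
theorem sharp_rtg_to_redex (hWf : ∀ r ∈ R, ¬ r.lhs.isVar)
    {θ : V → Term σ V} {f : σ} {ts : List (Term σ V)}
    {tsfin : List (Term σ V)} {ρ2 : Rule σ V} {δ2 : V → Term σ V} (hρ2 : ρ2 ∈ R)
    (hlen : (Term.substList θ ts).length = tsfin.length)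
    (hargs : ∀ (k : ℕ) (a : Term σ V), (Term.substList θ ts)[k]? = some a →
      ∃ b, tsfin[k]? = some b ∧ Relation.ReflTransGen (InnermostRewrite R) a b)
    (heq : Term.fn f tsfin = Term.subst δ2 ρ2.lhs) :
    Defined R f ∧
    Relation.ReflTransGen (InnermostRewrite (liftRules R))
      (Term.sharp R (Term.subst θ (Term.fn f ts)))
      (Term.subst (fun x => Term.embed (δ2 x)) (Term.sharp R ρ2.lhs)) := by
  cases hl : ρ2.lhs with
  | var y => exact absurd ⟨y, hl⟩ (hWf ρ2 hρ2)
  | fn g ls =>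
    rw [hl, Term.subst_fn] at heq
    injection heq with hfg hts
    subst hfg
    have hdf : Defined R f := ⟨ρ2, hρ2, ls, hl⟩
    refine ⟨hdf, ?_⟩
    have hrtg : Relation.ReflTransGen (InnermostRewrite (liftRules R))
        (Term.fn (SharpSym.sharp f) ((Term.substList θ ts).map Term.embed))
        (Term.fn (SharpSym.sharp f) (tsfin.map Term.embed)) := by
      refine ctx_steps' _ _ (by simp [hlen]) ?_
      intro k ea eb hea heb
      rw [List.getElem?_map] at hea heb
      cases ha : (Term.substList θ ts)[k]? with
      | none => rw [ha] at hea; simp at hea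
      | some a =>
        rw [ha] at hea
        simp only [Option.map_some] at hea
        injection hea with hea
        cases hb : tsfin[k]? with
        | none => rw [hb] at heb; simp at heb
        | some b =>
          rw [hb] at heb
          simp only [Option.map_some] at heb
          injection heb with heb
          obtain ⟨b', hb', hrt⟩ := hargs k a ha
          rw [hb] at hb'
          injection hb' with hb'
          subst hea
          subst heb
          subst hb'
          exact rtg_embed hrt
    rw [Term.subst_fn, sharp_fn_defined hdf, ← sharp_subst_defined hdf δ2 ls]
    rw [Term.subst_fn, sharp_fn_defined hdf, ← hts]
    exact hrtg

/-! ### Assembling a chain tree from the main lemma -/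

theorem RT_of_ML (hWf : ∀ r ∈ R, ¬ r.lhs.isVar)
    (hVar : ∀ r ∈ R, ∀ x, Term.VarIn x r.rhs → Term.VarIn x r.lhs)
    (n p : ℕ) (hml : ∀ s, MLstmt R n p s) : RTstmt R n p := by
  classical
  intro ρ hρ δ w u' hired hpre hder
  have hρlv := hWf ρ hρ
  have hnfδl : ∀ x, Term.VarIn x ρ.lhs → NormalForm R (δ x) :=
    innermost_redex_subst_nf R hρlv hired
  have hnfδr : ∀ x, Term.VarIn x ρ.rhs → NormalForm R (δ x) :=
    fun x hx => hnfδl x (hVar ρ hρ x hx)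
  obtain ⟨c, us, ns, hmsdc, hf2, hlen, hsum, hct⟩ :=
    hml ρ.rhs.size ρ.rhs δ w u' p le_rfl le_rfl hnfδr hpre hder
  have hdD : mkDT R ρ us ∈ DTparSet R := by
    refine Set.mem_iUnion₂.2 ⟨ρ, hρ, ?_⟩
    exact ⟨c, us, hmsdc, hf2, rfl⟩
  have husdef : ∀ (i : ℕ) (u : Term σ V), us[i]? = some u →
      ∃ (g : σ) (as : List (Term σ V)), u = Term.fn g as ∧ Defined R g := by
    intro i u hu
    obtain ⟨π, hπ, hsub⟩ := forall₂_get_right hf2 hu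
    have hπD : π ∈ PosD R ρ.rhs := hmsdc.1.1 π (mem_of_getElem?' hπ)
    obtain ⟨u0, hu0, g, as, h1, hg⟩ := hπD
    rw [hsub] at hu0
    injection hu0 with hu0
    exact ⟨g, as, by rw [hu0, h1], hg⟩
  -- choose subtrees realizing the counts
  have hch : ∀ i : ℕ, ∃ o : Option (ChainTree σ V),
      (o = none → ns[i]?.getD 0 = 0) ∧
      (∀ T, o = some T → ∃ (u : Term σ V) (w0 : Term (SharpSym σ) V), us[i]? = some u ∧
        Relation.ReflTransGen (InnermostRewrite (liftRules R))
          (Term.subst (fun x => Term.embed (δ x)) (Term.sharp R u)) w0 ∧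
        IsChainTree (DTparSet R) (liftRules R) T w0 ∧
        ((ns[i]?.getD 0 : ℕ) : ℕ∞) ≤ treeCount T (DTparSet R)) := by
    intro i
    cases hns : ns[i]? with
    | none => exact ⟨none, fun _ => by simp, fun T hT => absurd hT (by simp)⟩
    | some m =>
      have hilen : i < us.length := by
        rw [← hlen]; exact (List.getElem?_eq_some_iff.1 hns).1
      obtain ⟨u, hu⟩ : ∃ u, us[i]? = some u :=
        ⟨us[i]'hilen, List.getElem?_eq_some_iff.2 ⟨hilen, rfl⟩⟩
      rcases hct i u m hu hns with rfl | ⟨w0, T, hrt, hT, hcount⟩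
      · exact ⟨none, fun _ => by simp [hns], fun T hT => absurd hT (by simp)⟩
      · refine ⟨some T, fun h => absurd h (by simp), fun T' hT' => ?_⟩
        injection hT' with hT'
        subst hT'
        obtain ⟨g, as, rfl, hg⟩ := husdef i u hu
        refine ⟨_, w0, hu, ?_, hT, by simp [hns]; exact hcount⟩
        rw [← sharp_subst_defined hg δ as]
        exact hrt
  choose F hF1 hF2 using hch
  refine ⟨⟨fun q => match q with
    | [] => some (mkDT R ρ us, fun x => Term.embed (δ x))
    | i :: q' => match F i with
      | none => none
      | some Ti => Ti.label q'⟩,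
    ⟨⟨mkDT R ρ us, fun x => Term.embed (δ x), rfl, rfl⟩, ?_, ?_⟩, ?_⟩
  · -- parent-closedness
    intro q i hne
    cases q with
    | nil => simp
    | cons j q' =>
      cases hF : F j with
      | none =>
        exfalso
        apply hne
        show (match F j with
          | none => none
          | some Ti => Ti.label (q' ++ [i])) = none
        rw [hF]
      | some Tj =>
        obtain ⟨u, w0, hu, hrt, hT, _⟩ := hF2 j Tj hF
        have hne' : Tj.label (q' ++ [i]) ≠ none := by
          intro h0
          apply hne
          show (match F j with
            | none => none
            | some Ti => Ti.label (q' ++ [i])) = none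
          rw [hF]
          exact h0
        have hres := hT.2.1 q' i hne'
        show (match F j with
          | none => none
          | some Ti => Ti.label q') ≠ none
        rw [hF]
        exact hres
  · -- node conditions
    intro q r ν hq
    cases q with
    | nil =>
      have hq2 : some (mkDT R ρ us, fun x => Term.embed (δ x)) = some (r, ν) := hq
      injection hq2 with hq2
      have hr : r = mkDT R ρ us := congrArg Prod.fst hq2 |>.symm
      have hν : ν = fun x => Term.embed (δ x) := congrArg Prod.snd hq2 |>.symm
      subst hr
      subst hν
      refine ⟨hdD, ?_, ?_⟩
      · -- normal form of the sharped left-hand side instance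
        cases hl : ρ.lhs with
        | var y => exact absurd ⟨y, hl⟩ hρlv
        | fn g ls =>
          have hdg : Defined R g := ⟨ρ, hρ, ls, hl⟩
          have hargsnf : ∀ a ∈ Term.substList δ ls, NormalForm R a := by
            intro a ha
            obtain ⟨i, hi⟩ := List.getElem?_of_mem ha
            have hsuba : (Term.subst δ ρ.lhs).subtermAt [i] = some a := by
              rw [hl, Term.subst_fn, Term.subtermAt_fn_cons, hi]
              simp
            exact innermost_subterm_nf hired hsuba (by simp)
          have hkey : Term.subst (fun x => Term.embed (δ x)) ((mkDT R ρ us).lhs)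
              = Term.fn (SharpSym.sharp g) ((Term.substList δ ls).map Term.embed) := by
            show Term.subst (fun x => Term.embed (δ x)) (Term.sharp R ρ.lhs) = _
            rw [hl, ← sharp_subst_defined hdg δ ls, Term.subst_fn,
              sharp_fn_defined hdg]
          rw [hkey]
          exact sharp_nf hWf g _ hargsnf
      · -- children edges
        intro i r' δ' hc
        cases hF : F i with
        | none =>
          have hc2 : (match F i with
              | none => none
              | some Ti => Ti.label ([] : List ℕ)) = some (r', δ') := hc
          rw [hF] at hc2
          exact absurd hc2 (by simp)
        | some Ti =>
          have hc2 : (match F i with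
              | none => none
              | some Ti => Ti.label ([] : List ℕ)) = some (r', δ') := hc
          rw [hF] at hc2
          have hc3 : Ti.label [] = some (r', δ') := hc2
          obtain ⟨u, w0, hu, hrt, hT, _⟩ := hF2 i Ti hF
          obtain ⟨⟨r0, ν0, hlab0, hw0⟩, _, _⟩ := hT
          rw [hc3] at hlab0
          injection hlab0 with hlab0
          have hr0 : r0 = r' := (congrArg Prod.fst hlab0).symm
          have hν0 : ν0 = δ' := (congrArg Prod.snd hlab0).symm
          refine ⟨us.length, us.map (Term.sharp R), rfl, Term.sharp R u, ?_, ?_⟩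
          · simp [hu]
          · rw [← hr0, ← hν0, hw0]
            exact hrt
    | cons j q' =>
      have hq2 : (match F j with
          | none => none
          | some Ti => Ti.label q') = some (r, ν) := hq
      cases hF : F j with
      | none => rw [hF] at hq2; cases hq2
      | some Tj =>
        rw [hF] at hq2
        obtain ⟨u, w0, hu, hrt, hT, _⟩ := hF2 j Tj hF
        obtain ⟨h1, h2, h3⟩ := hT.2.2 q' r ν hq2
        refine ⟨h1, h2, ?_⟩
        intro i r'' δ'' hc
        have hc2 : (match F j with
            | none => none
            | some Ti => Ti.label (q' ++ [i])) = some (r'', δ'') := hc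
        rw [hF] at hc2
        exact h3 i r'' δ'' hc2
  · -- counting
    have hgi : ∀ i : ℕ, ((ns[i]?.getD 0 : ℕ) : ℕ∞) ≤
        (match F i with
          | none => (∅ : Set (List ℕ))
          | some Ti => {q | ∃ r' ν', Ti.label q = some (r', ν') ∧ r' ∈ DTparSet R}).encard := by
      intro i
      cases hF : F i with
      | none => simp [hF1 i hF]
      | some Ti =>
        obtain ⟨u, w0, hu, hrt, hT, hcount⟩ := hF2 i Ti hF
        exact hcount
    have hsum2 := lemCount ns _ hgi
    set U : Set (List ℕ) := {q : List ℕ | ∃ i p', i < ns.length ∧ q = i :: p' ∧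
      p' ∈ (match F i with
        | none => (∅ : Set (List ℕ))
        | some Ti => {q | ∃ r' ν', Ti.label q = some (r', ν') ∧ r' ∈ DTparSet R})} with hU
    unfold treeCount
    refine le_trans (?_ : _ ≤ (insert ([] : List ℕ) U).encard) (Set.encard_mono ?_)
    · have hdisj : Disjoint {([] : List ℕ)} U := by
        rw [Set.disjoint_left]
        intro q hq1 hq2
        simp only [Set.mem_singleton_iff] at hq1
        subst hq1
        obtain ⟨i, p', _, hq2, _⟩ := hq2
        cases hq2
      have hins : (insert ([] : List ℕ) U).encard = 1 + U.encard := by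
        rw [Set.insert_eq, Set.encard_union_eq hdisj, Set.encard_singleton]
      calc ((n : ℕ) : ℕ∞) + 1 ≤ ((ns.sum : ℕ) : ℕ∞) + 1 := by
            have hc : ((n : ℕ) : ℕ∞) ≤ ((ns.sum : ℕ) : ℕ∞) := by exact_mod_cast hsum
            exact add_le_add_left hc 1
        _ ≤ U.encard + 1 := by gcongr
        _ = 1 + U.encard := by rw [add_comm]
        _ = (insert ([] : List ℕ) U).encard := hins.symm
    · rintro q (rfl | hq)
      · exact ⟨mkDT R ρ us, fun x => Term.embed (δ x), rfl, hdD⟩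
      · obtain ⟨i, p', hi, rfl, hp'⟩ := hq
        cases hF : F i with
        | none => rw [hF] at hp'; cases hp'
        | some Ti =>
          rw [hF] at hp'
          obtain ⟨r', ν', hlab, hmem⟩ := hp'
          refine ⟨r', ν', ?_, hmem⟩
          show (match F i with
            | none => none
            | some Ti => Ti.label p') = some (r', ν')
          rw [hF]
          exact hlab

/-! ### The main lemma -/

theorem ML_body (hWf : ∀ r ∈ R, ¬ r.lhs.isVar)
    (hVar : ∀ r ∈ R, ∀ x, Term.VarIn x r.rhs → Term.VarIn x r.lhs)
    (n p s : ℕ)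
    (IH1 : ∀ n', n' < n → (∀ p'' s'', MLstmt R n' p'' s'') ∧ (∀ p'', RTstmt R n' p''))
    (IH2 : ∀ p'', p'' < p → RTstmt R n p'')
    (IH3 : ∀ s'', s'' < s → MLstmt R n p s'') :
    MLstmt R n p s := by
  classical
  intro r θ w u' p' hsize hp' hθ hpre hder
  cases r with
  | var x =>
    have hnf := hθ x Term.VarIn.var
    have hpre' : iterRel (InnermostRewrite R) p' (θ x) w := hpre
    obtain ⟨-, rfl⟩ := nf_iterRel_innermost hnf hpre'
    have hn0 : n = 0 := nf_iterRel_par hnf hder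
    subst hn0
    refine ⟨[], [], [], msdc_empty (posD_var R x), List.Forall₂.nil, rfl, le_refl 0, ?_⟩
    intro i u m hu hm
    simp at hu
  | fn f ts =>
    have hθsub : ∀ t ∈ ts, ∀ x, Term.VarIn x t → NormalForm R (θ x) :=
      fun t ht x hx => hθ x (Term.VarIn.fn ht hx)
    rcases Nat.eq_zero_or_pos n with rfl | hn
    · obtain ⟨cs, us, hmsdc, hf2⟩ := exists_msdc R (Term.fn f ts)
      refine ⟨cs, us, List.replicate us.length 0, hmsdc, hf2, by simp, by simp, ?_⟩
      intro i u m hu hm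
      exact Or.inl (List.eq_of_mem_replicate (mem_of_getElem?' hm))
    rw [Term.subst_fn] at hpre
    rcases psplit p' f (Term.substList θ ts) w hpre with
      ⟨ts', rfl, hlen, hargs⟩ | ⟨ts', ρ2, δ2, p2, hρ2, hlen, hargs, heq, hired, hp2, hcont⟩
    · -- no root step in the prefix
      have horigin : ∀ (k : ℕ) (a' : Term σ V), ts'[k]? = some a' →
          ∃ (tk : Term σ V) (qk : ℕ), ts[k]? = some tk ∧ qk ≤ p' ∧
            iterRel (InnermostRewrite R) qk (Term.subst θ tk) a' := by
        intro k a' hk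
        have hklen : k < (Term.substList θ ts).length := by
          rw [hlen]
          exact (List.getElem?_eq_some_iff.1 hk).1
        obtain ⟨a0, ha0⟩ : ∃ a0, (Term.substList θ ts)[k]? = some a0 :=
          ⟨(Term.substList θ ts)[k]'hklen, List.getElem?_eq_some_iff.2 ⟨hklen, rfl⟩⟩
        obtain ⟨b0, q, hb0, hq, hiter⟩ := hargs k a0 ha0
        rw [hk] at hb0
        injection hb0 with hb0
        subst hb0
        rw [Term.substList_getElem?] at ha0
        cases htk : ts[k]? with
        | none => rw [htk] at ha0; simp at ha0
        | some tk =>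
          rw [htk] at ha0
          injection ha0 with ha0
          subst ha0
          exact ⟨tk, q, rfl, hq, hiter⟩
      rcases split n f ts' u' hder hn with
        ⟨k, a', b, hk, hda⟩ | ⟨m, ts'', ρ3, δ3, q3, w3, hm, hρ3, hlen2, hargs2, htr, heq2,
          hired2, hpre2, hcont2⟩
      · -- (A) one argument carries the whole derivation
        obtain ⟨tk, qk, htk, hqk, hiterk⟩ := horigin k a' hk
        have hs1 : 1 ≤ s := by
          have := Term.size_pos (Term.fn f ts : Term σ V)
          omega
        have hsz : tk.size ≤ s - 1 := by
          have h1 := Term.mem_le_sizeList ts tk (mem_of_getElem?' htk)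
          have h2 : (Term.fn f ts : Term σ V).size = 1 + Term.sizeList ts := rfl
          omega
        obtain ⟨ck, usk, nsk, hmk, hf2k, hlenk, hsumk, hctk⟩ :=
          IH3 (s - 1) (by omega) tk θ a' b qk hsz (le_trans hqk hp')
            (hθsub tk (mem_of_getElem?' htk)) hiterk hda
        have hckne : ck ≠ [] := by
          obtain ⟨π0, hπ0⟩ := chain_ne_of_active R hWf (hθsub tk (mem_of_getElem?' htk))
            hiterk hda (by omega)
          exact msdc_ne_nil hmk hπ0
        by_cases hdf : Defined R f
        · exact ml_conclude_lift R htk n hmk hckne hf2k hlenk hctk hdf 0 (Or.inl rfl)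
            (by omega)
        · exact ml_conclude_lift_nodef R htk n hmk hckne hf2k hlenk hctk hdf hsumk
      · -- (B) a root step occurs during the parallel derivation
        have hargsC : ∀ (k : ℕ) (a : Term σ V), (Term.substList θ ts)[k]? = some a →
            ∃ b, ts''[k]? = some b ∧ Relation.ReflTransGen (InnermostRewrite R) a b := by
          intro k a ha
          obtain ⟨b1, q1, hb1, _, hq1⟩ := hargs k a ha
          obtain ⟨b2, hb2, hrt2⟩ := hargs2 k b1 hb1
          exact ⟨b2, hb2, (iterRel_rtg hq1).trans hrt2⟩
        obtain ⟨hdf, hrtg⟩ := sharp_rtg_to_redex R hWf hρ3 (hlen.trans hlen2) hargsC heq2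
        obtain ⟨T, hT, hcnt⟩ := (IH1 (n - m - 1) (by omega)).2 q3 ρ3 hρ3 δ3 w3 u'
          hired2 hpre2 hcont2
        have hctroot : CTb R (Term.sharp R (Term.subst θ (Term.fn f ts))) (n - m) := by
          refine Or.inr ⟨_, T, hrtg, hT, ?_⟩
          have hcast : ((n - m : ℕ) : ℕ∞) = ((n - m - 1 : ℕ) : ℕ∞) + 1 := by
            have heq3 : n - m = (n - m - 1) + 1 := by omega
            rw [heq3]
            push_cast
            rfl
          rw [hcast]
          exact hcnt
        rcases Nat.eq_zero_or_pos m with rfl | hm1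
        · exact ml_conclude_root R n n le_rfl hdf hctroot
        · rcases htr with rfl | ⟨k, a', b, hk, hdm⟩
          · omega
          · obtain ⟨tk, qk, htk, hqk, hiterk⟩ := horigin k a' hk
            obtain ⟨ck, usk, nsk, hmk, hf2k, hlenk, hsumk, hctk⟩ :=
              (IH1 m hm).1 p' tk.size tk θ a' b qk le_rfl hqk
                (hθsub tk (mem_of_getElem?' htk)) hiterk hdm
            have hckne : ck ≠ [] := by
              obtain ⟨π0, hπ0⟩ := chain_ne_of_active R hWf (hθsub tk (mem_of_getElem?' htk))
                hiterk hdm (by omega)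
              exact msdc_ne_nil hmk hπ0
            exact ml_conclude_lift R htk n hmk hckne hf2k hlenk hctk hdf (n - m) hctroot
              (by omega)
    · -- (RO) a root step occurs in the prefix
      obtain ⟨hdf, hrtg⟩ := sharp_rtg_to_redex R hWf hρ2 hlen hargs heq
      obtain ⟨T, hT, hcnt⟩ := IH2 p2 (by omega) ρ2 hρ2 δ2 w u' hired hcont hder
      have hctroot : CTb R (Term.sharp R (Term.subst θ (Term.fn f ts))) n := by
        refine Or.inr ⟨_, T, hrtg, hT, ?_⟩
        exact le_trans le_self_add hcnt
      exact ml_conclude_root R n n le_rfl hdf hctroot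

/-- The combined induction establishing both main statements. -/
theorem main_induction (hWf : ∀ r ∈ R, ¬ r.lhs.isVar)
    (hVar : ∀ r ∈ R, ∀ x, Term.VarIn x r.rhs → Term.VarIn x r.lhs) :
    ∀ n : ℕ, (∀ p s, MLstmt R n p s) ∧ (∀ p, RTstmt R n p) := by
  intro n
  induction n using Nat.strong_induction_on with
  | _ n IH1 =>
    have hML : ∀ p, (∀ s, MLstmt R n p s) ∧ RTstmt R n p := by
      intro p
      induction p using Nat.strong_induction_on with
      | _ p IH2 =>
        have hMLs : ∀ s, MLstmt R n p s := by
          intro s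
          induction s using Nat.strong_induction_on with
          | _ s IH3 =>
            exact ML_body R hWf hVar n p s IH1 (fun p'' hp'' => (IH2 p'' hp'').2) IH3
        exact ⟨hMLs, RT_of_ML R hWf hVar n p hMLs⟩
    exact ⟨fun p => (hML p).1, fun p => (hML p).2⟩

end Aux


/-- For a term `t = f(t₁,…,tₙ)` with all `tᵢ` in normal form
(in particular for basic terms), `Dh(t,⇉) ≤ Cplx⟨DTpar(R),DTpar(R),R⟩(t#)`. -/
theorem dh_parInnermost_le_cplx
    {σ V : Type} [Finite σ] (R : Set (Rule σ V)) (hR : IsWfTRS R)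
    (f : σ) (ts : List (Term σ V)) (hnf : ∀ u ∈ ts, NormalForm R u) :
    Dh (ParInnermost R) (Term.fn f ts) ≤
      Cplx (DTparSet R) (DTparSet R) (liftRules R)
        (Term.sharp R (Term.fn f ts)) := by
  classical
  have hWf := hR.2.1
  have hVar := hR.2.2
  apply sSup_le
  rintro e ⟨n, rfl, t', hder⟩
  cases n with
  | zero => simp only [Nat.cast_zero]; exact zero_le
  | succ n =>
    rcases split (n + 1) f ts t' hder (by omega) with
      ⟨k, a, b, hk, hda⟩ | ⟨m, ts', ρ, δ, q, w', hm, hρ, hlen, hargs, htr, heq, hired, hpre, hcont⟩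
    · -- an argument would have to rewrite, but all arguments are normal forms
      have hnfa : NormalForm R a := hnf a (mem_of_getElem?' hk)
      obtain ⟨a1, h1, -⟩ := hda
      exact absurd h1 (nf_not_par hnfa)
    · have hm0 : m = 0 := by
        rcases htr with rfl | ⟨k, a, b, hk, hdm⟩
        · rfl
        · exact nf_iterRel_par (hnf a (mem_of_getElem?' hk)) hdm
      subst hm0
      have hts' : ts' = ts := by
        apply List.ext_getElem?
        intro k
        cases h1 : ts[k]? with
        | none =>
          have h2 := List.getElem?_eq_none_iff.1 h1
          exact List.getElem?_eq_none_iff.2 (by omega)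
        | some a =>
          obtain ⟨b, hb, hrt⟩ := hargs k a h1
          rw [hb, nf_rtg_eq (hnf a (mem_of_getElem?' h1)) hrt]
      rw [hts'] at heq
      obtain ⟨T, hT, hcnt⟩ :=
        (main_induction R hWf hVar n).2 q ρ hρ δ w' t' hired hpre hcont
      cases hl : ρ.lhs with
      | var y => exact absurd ⟨y, hl⟩ (hWf ρ hρ)
      | fn g ls =>
        have heq2 := heq
        rw [hl, Term.subst_fn] at heq2
        injection heq2 with hfg hts
        subst hfg
        have hdf : Defined R f := ⟨ρ, hρ, ls, hl⟩
        have hsharp : Term.sharp R (Term.fn f ts)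
            = Term.subst (fun x => Term.embed (δ x)) (Term.sharp R ρ.lhs) := by
          rw [heq, hl, sharp_subst_defined hdf δ ls]
        rw [hsharp]
        have hmem : treeCount T (DTparSet R) ∈ {c : ℕ∞ | ∃ T' : ChainTree σ V,
            IsChainTree (DTparSet R) (liftRules R) T'
              (Term.subst (fun x => Term.embed (δ x)) (Term.sharp R ρ.lhs)) ∧
            c = treeCount T' (DTparSet R)} := ⟨T, hT, rfl⟩
        calc ((n + 1 : ℕ) : ℕ∞) ≤ treeCount T (DTparSet R) := by
              push_cast
              exact hcnt
          _ ≤ _ := le_sSup hmem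


end ParallelComplexity
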